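/- arXiv:2209.00801 — 8 statements merged into one kernel-verified Lean document; each statement's English description precedes it below -/
import Mathlib

section
/- Every non-bipartite triangle-free graph of order n and size m satisfies m ≤ (n-1)²/4 + 1. -/
open SimpleGraph Matrix Finset BigOperators

/-- The signless Laplacian matrix `Q(G) = D(G) + A(G)` of a simple graph, over `ℝ`. -/
noncomputable def signlessLaplacian {V : Type*} [Fintype V] [DecidableEq V]
    (G : SimpleGraph V) : Matrix V V ℝ :=
  letI := Classical.decRel G.Adj
  G.degMatrix ℝ + G.adjMatrix ℝ

/-- The `Q`-index of a graph: the largest eigenvalue of its signless Laplacian matrix. -/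
noncomputable def qIndex {V : Type*} [Fintype V] [DecidableEq V] (G : SimpleGraph V) : ℝ :=
  sSup (spectrum ℝ (signlessLaplacian G))

/-- The blow-up `C₅ ∘ (r₁,…,r₅)` of the 5-cycle: vertex `vᵢ` of `C₅` is replaced by an
independent set of `r i` vertices, and classes of adjacent cycle vertices are fully joined. -/
def C5blowup (r : Fin 5 → ℕ) : SimpleGraph ((i : Fin 5) × Fin (r i)) where
  Adj a b := a.1 = b.1 + 1 ∨ b.1 = a.1 + 1
  symm := ⟨fun a b h => Or.symm h⟩
  loopless := ⟨fun a h => by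
    have h5 : ∀ i : Fin 5, ¬ i = i + 1 := by decide
    rcases h with h | h <;> exact h5 _ h⟩

/-- The graph `C₅ • K_{1,t}` obtained by identifying a vertex of the 5-cycle
(the vertex `Sum.inl 0`) with the center of the star `K_{1,t}`. -/
def C5star (t : ℕ) : SimpleGraph (Fin 5 ⊕ Fin t) where
  Adj a b :=
    (∃ i j : Fin 5, a = Sum.inl i ∧ b = Sum.inl j ∧ (i = j + 1 ∨ j = i + 1)) ∨
    (a = Sum.inl 0 ∧ ∃ j : Fin t, b = Sum.inr j) ∨
    (b = Sum.inl 0 ∧ ∃ j : Fin t, a = Sum.inr j)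
  symm := ⟨fun a b h => by
    rcases h with ⟨i, j, hi, hj, hij⟩ | ⟨h1, j, h2⟩ | ⟨h1, j, h2⟩
    · exact Or.inl ⟨j, i, hj, hi, Or.symm hij⟩
    · exact Or.inr (Or.inr ⟨h1, j, h2⟩)
    · exact Or.inr (Or.inl ⟨h1, j, h2⟩)⟩
  loopless := ⟨fun a h => by
    have h5 : ∀ i : Fin 5, ¬ i = i + 1 := by decide
    rcases h with ⟨i, j, hi, hj, hij⟩ | ⟨h1, j, h2⟩ | ⟨h1, j, h2⟩
    · subst hi; cases hj; rcases hij with h | h <;> exact h5 _ h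
    · subst h1; simp at h2
    · subst h1; simp at h2⟩

/-- The star `K_{1,t}` with center `0` and `t` leaves. -/
def starG (t : ℕ) : SimpleGraph (Fin (t + 1)) where
  Adj a b := a ≠ b ∧ (a = 0 ∨ b = 0)
  symm := ⟨fun a b h => ⟨h.1.symm, h.2.symm⟩⟩
  loopless := ⟨fun a h => h.1 rfl⟩

section Aux
variable {V : Type*} {G : SimpleGraph V}

lemma exists_walk_getVert {a b : V} (w : G.Walk a b) (i : ℕ) :
    ∀ j : ℕ, i ≤ j → j ≤ w.length →
    ∃ p : G.Walk (w.getVert i) (w.getVert j), p.length = j - i := by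
  intro j hij
  induction j, hij using Nat.le_induction with
  | base => intro _; exact ⟨SimpleGraph.Walk.nil, by simp⟩
  | succ j hij ih =>
    intro hj
    obtain ⟨p, hp⟩ := ih (by omega)
    exact ⟨p.concat (w.adj_getVert_succ (by omega)), by
      rw [SimpleGraph.Walk.length_concat, hp]; omega⟩

lemma exists_odd_closed_walk (h : ¬ G.Colorable 2) :
    ∃ (u : V) (p : G.Walk u u), Odd p.length := by
  by_contra hc
  push_neg at hc
  simp only [Nat.not_odd_iff_even] at hc
  apply h
  have hcol : ∀ v : V, G.Reachable ((G.connectedComponentMk v).out) v := by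
    intro v
    exact SimpleGraph.ConnectedComponent.eq.mp (Quot.out_eq _)
  let pw : ∀ v : V, G.Walk ((G.connectedComponentMk v).out) v := fun v => (hcol v).some
  refine ⟨SimpleGraph.Coloring.mk (fun v => (⟨(pw v).length % 2, Nat.mod_lt _ two_pos⟩ : Fin 2)) ?_⟩
  intro u v huv heq
  have hrep : (G.connectedComponentMk v).out = (G.connectedComponentMk u).out := by
    rw [SimpleGraph.ConnectedComponent.eq.mpr huv.reachable]
  have hq := hc _ ((pw u).append ((SimpleGraph.Walk.cons huv SimpleGraph.Walk.nil).append
      ((pw v).reverse.copy rfl hrep)))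
  rw [SimpleGraph.Walk.length_append, SimpleGraph.Walk.length_append,
    SimpleGraph.Walk.length_cons, SimpleGraph.Walk.length_nil,
    SimpleGraph.Walk.length_copy, SimpleGraph.Walk.length_reverse, Nat.even_iff] at hq
  have := congrArg Fin.val heq
  simp only at this
  omega

end Aux

section Aux2
variable {V : Type*} [Fintype V] [DecidableEq V] {G : SimpleGraph V} [DecidableRel G.Adj]

lemma neighbor_inter_eq (T : Finset V) (v : V) :
    G.neighborFinset v ∩ T = T.filter (G.Adj v) := by
  ext x; simp [SimpleGraph.mem_neighborFinset, and_comm]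

lemma swap_sum (A B : Finset V) :
    ∑ v ∈ A, (G.neighborFinset v ∩ B).card = ∑ v ∈ B, (G.neighborFinset v ∩ A).card := by
  calc ∑ v ∈ A, (G.neighborFinset v ∩ B).card
      = ∑ v ∈ A, ∑ x ∈ B, if G.Adj v x then 1 else 0 := by
        simp_rw [neighbor_inter_eq, Finset.card_filter]
    _ = ∑ x ∈ B, ∑ v ∈ A, if G.Adj v x then 1 else 0 := Finset.sum_comm
    _ = ∑ x ∈ B, ∑ v ∈ A, if G.Adj x v then 1 else 0 :=
        Finset.sum_congr rfl fun x _ => Finset.sum_congr rfl fun v _ =>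
          if_congr (G.adj_comm v x) rfl rfl
    _ = ∑ v ∈ B, (G.neighborFinset v ∩ A).card := by
        simp_rw [neighbor_inter_eq, Finset.card_filter]

lemma mantel_sum (htf : G.CliqueFree 3) (T : Finset V) :
    2 * (∑ v ∈ T, ((G.neighborFinset v ∩ T).card : ℝ)) ≤ (T.card : ℝ)^2 := by
  set f : V → ℝ := fun v => ((G.neighborFinset v ∩ T).card : ℝ) with hf
  have hbound : ∀ u v : V, G.Adj u v → f u + f v ≤ T.card := by
    intro u v huv
    have hdisj : Disjoint (G.neighborFinset u ∩ T) (G.neighborFinset v ∩ T) := by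
      rw [Finset.disjoint_left]
      intro w hw1 hw2
      simp only [Finset.mem_inter, SimpleGraph.mem_neighborFinset] at hw1 hw2
      exact htf {u, v, w} (SimpleGraph.is3Clique_triple_iff.mpr ⟨huv, hw1.1, hw2.1⟩)
    have hsub : (G.neighborFinset u ∩ T) ∪ (G.neighborFinset v ∩ T) ⊆ T :=
      Finset.union_subset Finset.inter_subset_right Finset.inter_subset_right
    have hc := Finset.card_le_card hsub
    rw [Finset.card_union_of_disjoint hdisj] at hc
    simp only [hf]
    exact_mod_cast hc
  have hswap : ∑ u ∈ T, ∑ v ∈ G.neighborFinset u ∩ T, f v = ∑ v ∈ T, f v * f v := by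
    calc ∑ u ∈ T, ∑ v ∈ G.neighborFinset u ∩ T, f v
        = ∑ u ∈ T, ∑ v ∈ T, if G.Adj u v then f v else 0 := by
          simp_rw [neighbor_inter_eq, Finset.sum_filter]
      _ = ∑ v ∈ T, ∑ u ∈ T, if G.Adj u v then f v else 0 := Finset.sum_comm
      _ = ∑ v ∈ T, f v * f v := by
          refine Finset.sum_congr rfl fun v _ => ?_
          rw [← Finset.sum_filter, Finset.sum_const, nsmul_eq_mul]
          congr 1
          have : T.filter (fun u => G.Adj u v) = G.neighborFinset v ∩ T := by
            rw [neighbor_inter_eq]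
            exact Finset.filter_congr fun u _ => by rw [G.adj_comm]
          rw [this]
  have hself : ∀ u : V, ∑ v ∈ G.neighborFinset u ∩ T, f u = f u * f u := fun u => by
    rw [Finset.sum_const, nsmul_eq_mul, hf]
  have h2Q : 2 * ∑ v ∈ T, f v * f v ≤ (T.card : ℝ) * ∑ v ∈ T, f v := by
    have heq1 : ∑ u ∈ T, ∑ v ∈ G.neighborFinset u ∩ T, (f u + f v)
        = ∑ u ∈ T, (f u * f u) + ∑ u ∈ T, ∑ v ∈ G.neighborFinset u ∩ T, f v := by
      rw [← Finset.sum_add_distrib]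
      exact Finset.sum_congr rfl fun u _ => by rw [Finset.sum_add_distrib, hself u]
    have heq2 : ∑ u ∈ T, ∑ v ∈ G.neighborFinset u ∩ T, (f u + f v)
        = 2 * ∑ v ∈ T, f v * f v := by rw [heq1, hswap]; ring
    rw [← heq2]
    calc ∑ u ∈ T, ∑ v ∈ G.neighborFinset u ∩ T, (f u + f v)
        ≤ ∑ u ∈ T, ∑ _v ∈ G.neighborFinset u ∩ T, (T.card : ℝ) := by
          refine Finset.sum_le_sum fun u _ => Finset.sum_le_sum fun v hv => ?_
          exact hbound u v (by simpa [SimpleGraph.mem_neighborFinset] using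
            (Finset.mem_inter.mp hv).1)
      _ = ∑ u ∈ T, f u * (T.card : ℝ) := by
          refine Finset.sum_congr rfl fun u _ => ?_
          rw [Finset.sum_const, nsmul_eq_mul, hf]
      _ = (T.card : ℝ) * ∑ v ∈ T, f v := by rw [← Finset.sum_mul]; ring
  have hCS : (∑ v ∈ T, f v)^2 ≤ (T.card : ℝ) * ∑ v ∈ T, f v ^ 2 :=
    sq_sum_le_card_mul_sum_sq
  have hA0 : 0 ≤ ∑ v ∈ T, f v := Finset.sum_nonneg fun v _ => by positivity
  have hc0 : (0:ℝ) ≤ T.card := Nat.cast_nonneg _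
  simp_rw [← sq] at h2Q
  nlinarith [hCS, h2Q, hA0, hc0, sq_nonneg (∑ v ∈ T, f v)]

end Aux2

/-- Every non-bipartite triangle-free graph of order `n` and size `m` satisfies
`m ≤ (n-1)²/4 + 1`. -/
theorem stmt1 {n : ℕ} (G : SimpleGraph (Fin n)) [DecidableRel G.Adj]
    (hnb : ¬ G.Colorable 2) (htf : G.CliqueFree 3) :
    (G.edgeFinset.card : ℝ) ≤ ((n : ℝ) - 1) ^ 2 / 4 + 1 := by
  classical
  obtain ⟨u0, p0, hp0⟩ := exists_odd_closed_walk hnb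
  have hPex : ∃ k, ∃ (u : Fin n) (p : G.Walk u u), p.length = k ∧ Odd k :=
    ⟨p0.length, u0, p0, rfl, hp0⟩
  set g := Nat.find hPex with hgdef
  obtain ⟨u, w, hwlen, hgodd⟩ := Nat.find_spec hPex
  rw [← hgdef] at hwlen hgodd
  have hmin : ∀ (x : Fin n) (q : G.Walk x x), Odd q.length → g ≤ q.length := by
    intro x q hq
    by_contra hlt
    push_neg at hlt
    exact Nat.find_min hPex hlt ⟨x, q, rfl, hq⟩
  -- g ≥ 5
  have hgetg : w.getVert g = u := by rw [← hwlen, SimpleGraph.Walk.getVert_length]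
  have hget0 : w.getVert 0 = u := w.getVert_zero
  have hg1 : g ≠ 1 := by
    intro h
    have hadj := w.adj_getVert_succ (i := 0) (by omega)
    rw [hget0, show (0+1 : ℕ) = g by omega, hgetg] at hadj
    exact G.irrefl hadj
  have hg3 : g ≠ 3 := by
    intro h
    have ha := w.adj_getVert_succ (i := 0) (by omega)
    have hb := w.adj_getVert_succ (i := 1) (by omega)
    have hc2 := w.adj_getVert_succ (i := 2) (by omega)
    rw [hget0] at ha
    rw [show (2+1 : ℕ) = g by omega, hgetg] at hc2
    exact htf {u, w.getVert 1, w.getVert 2}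
      (SimpleGraph.is3Clique_triple_iff.mpr ⟨ha, hc2.symm, hb⟩)
  have hg5 : 5 ≤ g := by rcases hgodd with ⟨t, ht⟩; omega
  -- arcs
  have harc : ∀ i j : ℕ, i ≤ j → j ≤ g →
      ∃ p : G.Walk (w.getVert i) (w.getVert j), p.length = j - i := by
    intro i j hij hj
    exact exists_walk_getVert w i j hij (by omega)
  have harc2 : ∀ i j : ℕ, i ≤ j → j ≤ g →
      ∃ p : G.Walk (w.getVert j) (w.getVert i), p.length = (g - j) + i := by
    intro i j hij hj
    obtain ⟨p1, hp1⟩ := harc j g hj le_rfl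
    obtain ⟨p2, hp2⟩ := harc 0 i (Nat.zero_le _) (le_trans hij hj)
    refine ⟨(p1.copy rfl (by rw [hgetg, hget0])).append p2, ?_⟩
    rw [SimpleGraph.Walk.length_append, SimpleGraph.Walk.length_copy, hp1, hp2]
    omega
  -- injectivity of getVert on [0, g)
  have hinj : ∀ i j : ℕ, i < j → j ≤ g → ¬(i = 0 ∧ j = g) → w.getVert i ≠ w.getVert j := by
    intro i j hij hj hne heq
    obtain ⟨p1, hp1⟩ := harc i j (le_of_lt hij) hj
    obtain ⟨p2, hp2⟩ := harc2 i j (le_of_lt hij) hj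
    have hor : Odd (j - i) ∨ Odd ((g - j) + i) := by
      rcases hgodd with ⟨t, ht⟩
      rw [Nat.odd_iff, Nat.odd_iff]
      omega
    rcases hor with hodd | hodd
    · have := hmin _ (p1.copy rfl heq.symm)
        (by rw [SimpleGraph.Walk.length_copy, hp1]; exact hodd)
      rw [SimpleGraph.Walk.length_copy, hp1] at this
      omega
    · have := hmin _ (p2.copy rfl heq)
        (by rw [SimpleGraph.Walk.length_copy, hp2]; exact hodd)
      rw [SimpleGraph.Walk.length_copy, hp2] at this
      omega
  -- key pairwise lemma
  have hkey : ∀ (v : Fin n) (i j : ℕ), i < j → j < g →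
      G.Adj v (w.getVert i) → G.Adj v (w.getVert j) → j - i = 2 ∨ j - i = g - 2 := by
    intro v i j hij hj hvi hvj
    obtain ⟨p1, hp1⟩ := harc i j (le_of_lt hij) (le_of_lt hj)
    obtain ⟨p2, hp2⟩ := harc2 i j (le_of_lt hij) (le_of_lt hj)
    by_cases hpar : Odd (j - i)
    · have h1 := hmin v
        (SimpleGraph.Walk.cons hvi (p1.append (SimpleGraph.Walk.cons hvj.symm SimpleGraph.Walk.nil)))
        (by
          rw [SimpleGraph.Walk.length_cons, SimpleGraph.Walk.length_append,
            SimpleGraph.Walk.length_cons, SimpleGraph.Walk.length_nil, hp1]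
          rcases hpar with ⟨t, ht⟩
          exact ⟨t + 1, by omega⟩)
      rw [SimpleGraph.Walk.length_cons, SimpleGraph.Walk.length_append,
        SimpleGraph.Walk.length_cons, SimpleGraph.Walk.length_nil, hp1] at h1
      rcases hgodd with ⟨t, ht⟩
      rcases hpar with ⟨s, hs⟩
      right; omega
    · have hpar2 : Odd ((g - j) + i) := by
        rcases hgodd with ⟨t, ht⟩
        rw [Nat.not_odd_iff_even, Nat.even_iff] at hpar
        rw [Nat.odd_iff]
        omega
      have h1 := hmin v
        (SimpleGraph.Walk.cons hvj (p2.append (SimpleGraph.Walk.cons hvi.symm SimpleGraph.Walk.nil)))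
        (by
          rw [SimpleGraph.Walk.length_cons, SimpleGraph.Walk.length_append,
            SimpleGraph.Walk.length_cons, SimpleGraph.Walk.length_nil, hp2]
          rcases hpar2 with ⟨t, ht⟩
          exact ⟨t + 1, by omega⟩)
      rw [SimpleGraph.Walk.length_cons, SimpleGraph.Walk.length_append,
        SimpleGraph.Walk.length_cons, SimpleGraph.Walk.length_nil, hp2] at h1
      rw [Nat.not_odd_iff_even, Nat.even_iff] at hpar
      left; omega
  -- no vertex has three neighbours on the cycle
  have h3 : ∀ (v : Fin n) (i j k : ℕ), i < j → j < k → k < g →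
      G.Adj v (w.getVert i) → G.Adj v (w.getVert j) → G.Adj v (w.getVert k) → False := by
    intro v i j k hij hjk hk hvi hvj hvk
    have h1 := hkey v i j hij (by omega) hvi hvj
    have h2 := hkey v j k hjk hk hvj hvk
    have h4 := hkey v i k (by omega) hk hvi hvk
    rcases hgodd with ⟨t, ht⟩
    omega
  -- the support finset
  set S : Finset (Fin n) := w.support.toFinset with hSdef
  have hSmem : ∀ x ∈ S, ∃ i, i < g ∧ w.getVert i = x := by
    intro x hx
    rw [hSdef, List.mem_toFinset, SimpleGraph.Walk.mem_support_iff_exists_getVert] at hx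
    obtain ⟨i, hi, hile⟩ := hx
    rcases Nat.lt_or_ge i g with h | h
    · exact ⟨i, h, hi⟩
    · have : i = g := by omega
      exact ⟨0, by omega, by rw [hget0, ← hgetg, ← this, hi]⟩
  have hScard : S.card = g := by
    have hSim : S = (Finset.range g).image w.getVert := by
      ext x
      simp only [Finset.mem_image, Finset.mem_range]
      constructor
      · intro hx
        obtain ⟨i, hig, hi⟩ := hSmem x hx
        exact ⟨i, hig, hi⟩
      · rintro ⟨i, hig, rfl⟩
        rw [hSdef, List.mem_toFinset, SimpleGraph.Walk.mem_support_iff_exists_getVert]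
        exact ⟨i, rfl, by omega⟩
    rw [hSim, Finset.card_image_of_injOn, Finset.card_range]
    intro i hi j hj hij
    simp only [Finset.coe_range, Set.mem_Iio] at hi hj
    by_contra hne
    rcases Nat.lt_or_ge i j with h | h
    · exact hinj i j h (by omega) (by omega) hij
    · exact hinj j i (by omega) (by omega) (by omega) hij.symm
  have hdeg2 : ∀ v : Fin n, (G.neighborFinset v ∩ S).card ≤ 2 := by
    intro v
    by_contra hcard
    push_neg at hcard
    obtain ⟨t, hts, htcard⟩ := Finset.exists_subset_card_eq (n := 3) hcard
    obtain ⟨a, b, c, hab, hac, hbc, rfl⟩ := Finset.card_eq_three.mp htcard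
    have hmem : ∀ x ∈ ({a, b, c} : Finset (Fin n)), G.Adj v x ∧ x ∈ S := by
      intro x hx
      have := hts hx
      simp only [Finset.mem_inter, SimpleGraph.mem_neighborFinset] at this
      exact this
    obtain ⟨hva, haS⟩ := hmem a (by simp)
    obtain ⟨hvb, hbS⟩ := hmem b (by simp)
    obtain ⟨hvc, hcS⟩ := hmem c (by simp)
    obtain ⟨ia, hia, hiav⟩ := hSmem a haS
    obtain ⟨ib, hib, hibv⟩ := hSmem b hbS
    obtain ⟨ic, hic, hicv⟩ := hSmem c hcS
    rw [← hiav] at hva hab hac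
    rw [← hibv] at hvb hbc
    rw [← hicv] at hvc
    rw [← hibv] at hab
    rw [← hicv] at hac hbc
    have hne1 : ia ≠ ib := fun h => hab (by rw [h])
    have hne2 : ia ≠ ic := fun h => hac (by rw [h])
    have hne3 : ib ≠ ic := fun h => hbc (by rw [h])
    rcases Nat.lt_trichotomy ia ib with h1 | h1 | h1
    · rcases Nat.lt_trichotomy ib ic with h2 | h2 | h2
      · exact h3 v ia ib ic h1 h2 hic hva hvb hvc
      · exact hne3 h2
      · rcases Nat.lt_trichotomy ia ic with h4 | h4 | h4
        · exact h3 v ia ic ib h4 h2 hib hva hvc hvb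
        · exact hne2 h4
        · exact h3 v ic ia ib h4 h1 hib hvc hva hvb
    · exact hne1 h1
    · rcases Nat.lt_trichotomy ia ic with h2 | h2 | h2
      · exact h3 v ib ia ic h1 h2 hic hvb hva hvc
      · exact hne2 h2
      · rcases Nat.lt_trichotomy ib ic with h4 | h4 | h4
        · exact h3 v ib ic ia h4 h2 hia hvb hvc hva
        · exact hne3 h4
        · exact h3 v ic ib ia h4 h1 hia hvc hvb hva
  -- counting
  have hgn : g ≤ n := by
    rw [← hScard]
    simpa using S.card_le_univ
  have hcompl : (Sᶜ : Finset (Fin n)).card = n - g := by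
    rw [Finset.card_compl, hScard]
    simp
  have hdegsplit : ∀ v : Fin n, G.degree v
      = (G.neighborFinset v ∩ S).card + (G.neighborFinset v ∩ Sᶜ).card := by
    intro v
    have hdisj : Disjoint (G.neighborFinset v ∩ S) (G.neighborFinset v ∩ Sᶜ) := by
      rw [Finset.disjoint_left]
      intro x hx1 hx2
      simp only [Finset.mem_inter, Finset.mem_compl] at hx1 hx2
      exact hx2.2 hx1.2
    have hun : (G.neighborFinset v ∩ S) ∪ (G.neighborFinset v ∩ Sᶜ) = G.neighborFinset v := by
      rw [← Finset.inter_union_distrib_left, Finset.union_compl, Finset.inter_univ]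
    have hcu := Finset.card_union_of_disjoint hdisj
    rw [hun] at hcu
    rw [← G.card_neighborFinset_eq_degree, ← hcu]
  have hhand : ∑ v, G.degree v = 2 * G.edgeFinset.card := G.sum_degrees_eq_twice_card_edges
  have hsplit : 2 * G.edgeFinset.card
      = (∑ v, (G.neighborFinset v ∩ S).card)
        + ((∑ v ∈ S, (G.neighborFinset v ∩ Sᶜ).card)
          + (∑ v ∈ Sᶜ, (G.neighborFinset v ∩ Sᶜ).card)) := by
    rw [← hhand]
    calc ∑ v, G.degree v
        = ∑ v, ((G.neighborFinset v ∩ S).card + (G.neighborFinset v ∩ Sᶜ).card) :=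
          Finset.sum_congr rfl fun v _ => hdegsplit v
      _ = (∑ v, (G.neighborFinset v ∩ S).card) + ∑ v, (G.neighborFinset v ∩ Sᶜ).card :=
          Finset.sum_add_distrib
      _ = _ := by rw [← Finset.sum_add_sum_compl S (fun v => (G.neighborFinset v ∩ Sᶜ).card)]
  have hb1 : (∑ v, (G.neighborFinset v ∩ S).card) ≤ 2 * n := by
    calc ∑ v, (G.neighborFinset v ∩ S).card ≤ ∑ _v : Fin n, 2 :=
          Finset.sum_le_sum fun v _ => hdeg2 v
      _ = 2 * n := by simp [mul_comm]
  have hb2 : (∑ v ∈ S, (G.neighborFinset v ∩ Sᶜ).card) ≤ 2 * (n - g) := by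
    rw [swap_sum]
    calc ∑ v ∈ Sᶜ, (G.neighborFinset v ∩ S).card ≤ ∑ _v ∈ Sᶜ, 2 :=
          Finset.sum_le_sum fun v _ => hdeg2 v
      _ = 2 * (n - g) := by rw [Finset.sum_const, hcompl, smul_eq_mul, mul_comm]
  have hb3 : 2 * (∑ v ∈ Sᶜ, ((G.neighborFinset v ∩ Sᶜ).card : ℝ)) ≤ ((n : ℝ) - g)^2 := by
    have := mantel_sum htf (Sᶜ : Finset (Fin n))
    rwa [hcompl, Nat.cast_sub hgn] at this
  -- put it together over ℝ
  have hcast := congrArg (fun k : ℕ => (k : ℝ)) hsplit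
  push_cast at hcast
  have hb1' : ((∑ v, (G.neighborFinset v ∩ S).card : ℕ) : ℝ) ≤ 2 * n := by exact_mod_cast hb1
  have hb2' : ((∑ v ∈ S, (G.neighborFinset v ∩ Sᶜ).card : ℕ) : ℝ) ≤ 2 * ((n : ℝ) - g) := by
    have : ((2 * (n - g) : ℕ) : ℝ) = 2 * ((n : ℝ) - g) := by
      push_cast [Nat.cast_sub hgn]
      ring
    rw [← this]
    exact_mod_cast hb2
  have hb3' : ((∑ v ∈ Sᶜ, (G.neighborFinset v ∩ Sᶜ).card : ℕ) : ℝ) ≤ ((n : ℝ) - g)^2 / 2 := by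
    push_cast at hb3 ⊢
    linarith
  have hg5' : (5 : ℝ) ≤ g := by exact_mod_cast hg5
  have hgn' : (g : ℝ) ≤ n := by exact_mod_cast hgn
  have hkey2 : 2 * (G.edgeFinset.card : ℝ) ≤ 2 * n + 2 * ((n:ℝ) - g) + ((n:ℝ) - g)^2 / 2 := by
    push_cast at hcast hb1' hb2' hb3' ⊢
    linarith
  nlinarith [mul_nonneg (by linarith : (0:ℝ) ≤ (g:ℝ) - 5) (by linarith : (0:ℝ) ≤ (n:ℝ) - g),
    mul_nonneg (by linarith : (0:ℝ) ≤ (g:ℝ) - 5) (by linarith : (0:ℝ) ≤ (g:ℝ) - 1)]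
end

section
/- For every simple graph G, q(G) ≤ max{d(u) + m(u) : u ∈ V(G)}, where m(u) = (1/d(u)) Σ_{v ∈ N(u)} d(v) is the average degree of the neighbors of u. -/
open SimpleGraph Matrix Finset BigOperators

/-- For every graph `G` with minimum degree at least one,
`q(G) ≤ max {d(u) + m(u) : u ∈ V(G)}`, where `m(u)` is the average degree of the
neighbours of `u`. -/
theorem stmt3 {V : Type*} [Fintype V] [DecidableEq V] [Nonempty V]
    (G : SimpleGraph V) [DecidableRel G.Adj] (hd : ∀ v, 0 < G.degree v) :
    qIndex G ≤ ⨆ u : V, ((G.degree u : ℝ) +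
      (∑ v ∈ G.neighborFinset u, (G.degree v : ℝ)) / G.degree u) := by
  classical
  set f : V → ℝ := fun u => ((G.degree u : ℝ) +
      (∑ v ∈ G.neighborFinset u, (G.degree v : ℝ)) / G.degree u) with hf
  have hBdd : BddAbove (Set.range f) := Set.Finite.bddAbove (Set.finite_range f)
  have hd' : ∀ v, (0 : ℝ) < G.degree v := fun v => by exact_mod_cast hd v
  have hfpos : ∀ u, 0 ≤ f u := by
    intro u
    have : 0 ≤ (∑ v ∈ G.neighborFinset u, (G.degree v : ℝ)) / G.degree u := by
      apply div_nonneg _ (hd' u).le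
      exact Finset.sum_nonneg fun v _ => (hd' v).le
    exact add_nonneg (hd' u).le this
  have hB0 : (0 : ℝ) ≤ ⨆ u, f u :=
    le_trans (hfpos (Classical.arbitrary V)) (le_ciSup hBdd _)
  apply Real.sSup_le _ hB0
  intro μ hμ
  -- eigenvector
  rw [← AlgEquiv.spectrum_eq (Matrix.toLinAlgEquiv' : Matrix V V ℝ ≃ₐ[ℝ] _),
    ← Module.End.hasEigenvalue_iff_mem_spectrum] at hμ
  obtain ⟨x, hx⟩ := hμ.exists_hasEigenvector
  have hxe : (signlessLaplacian G) *ᵥ x = μ • x := by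
    have := hx.apply_eq_smul
    rwa [Matrix.toLinAlgEquiv'_apply] at this
  have key : ∀ u, (signlessLaplacian G *ᵥ x) u
      = (G.degree u : ℝ) * x u + ∑ v ∈ G.neighborFinset u, x v := by
    intro u
    rw [signlessLaplacian, Matrix.add_mulVec]
    simp only [Pi.add_apply, SimpleGraph.degMatrix_mulVec_apply,
      SimpleGraph.adjMatrix_mulVec_apply]
    congr!
  set y : V → ℝ := fun v => |x v| with hy
  obtain ⟨u, hu⟩ := Finite.exists_max (fun v => y v / G.degree v)
  set c : ℝ := y u / G.degree u with hc
  obtain ⟨v0, hv0⟩ := Function.ne_iff.mp hx.right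
  have hc0 : 0 < c := by
    have h1 : 0 < y v0 / G.degree v0 := div_pos (abs_pos.mpr hv0) (hd' v0)
    exact lt_of_lt_of_le h1 (hu v0)
  have hyle : ∀ v, y v ≤ c * G.degree v := fun v =>
    (div_le_iff₀ (hd' v)).mp (hu v)
  have hyu : y u = c * G.degree u := by
    rw [hc, div_mul_cancel₀]
    exact (hd' u).ne'
  have step1 : μ * y u ≤ (G.degree u : ℝ) * y u + ∑ v ∈ G.neighborFinset u, y v := by
    have h1 : μ * x u = (G.degree u : ℝ) * x u + ∑ v ∈ G.neighborFinset u, x v := by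
      rw [← key u, hxe]; rfl
    calc μ * y u ≤ |μ| * y u := by
          apply mul_le_mul_of_nonneg_right (le_abs_self μ) (abs_nonneg _)
      _ = |μ * x u| := by rw [abs_mul]
      _ = |(G.degree u : ℝ) * x u + ∑ v ∈ G.neighborFinset u, x v| := by rw [h1]
      _ ≤ |(G.degree u : ℝ) * x u| + |∑ v ∈ G.neighborFinset u, x v| := abs_add_le _ _
      _ ≤ (G.degree u : ℝ) * y u + ∑ v ∈ G.neighborFinset u, y v := by
          gcongr
          · rw [abs_mul, abs_of_nonneg (hd' u).le]
          · exact Finset.abs_sum_le_sum_abs _ _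
  have step2 : μ * (c * G.degree u) ≤
      c * ((G.degree u : ℝ) * G.degree u + ∑ v ∈ G.neighborFinset u, (G.degree v : ℝ)) := by
    calc μ * (c * G.degree u) = μ * y u := by rw [hyu]
      _ ≤ (G.degree u : ℝ) * y u + ∑ v ∈ G.neighborFinset u, y v := step1
      _ ≤ (G.degree u : ℝ) * (c * G.degree u)
            + ∑ v ∈ G.neighborFinset u, c * (G.degree v : ℝ) := by
          gcongr
          · rw [hyu]
          · exact hyle _
      _ = c * ((G.degree u : ℝ) * G.degree u + ∑ v ∈ G.neighborFinset u, (G.degree v : ℝ)) := by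
          rw [← Finset.mul_sum]; ring
  have step3 : μ ≤ f u := by
    have h2 : μ * (G.degree u : ℝ) ≤
        (G.degree u : ℝ) * G.degree u + ∑ v ∈ G.neighborFinset u, (G.degree v : ℝ) := by
      have := step2
      rw [show μ * (c * G.degree u) = c * (μ * G.degree u) by ring] at this
      exact le_of_mul_le_mul_left this hc0
    rw [hf]
    rw [← le_div_iff₀ (hd' u)] at h2
    refine h2.trans (le_of_eq ?_)
    rw [add_div, mul_div_cancel_right₀ _ (hd' u).ne']
  exact step3.trans (le_ciSup hBdd u)
end

section
/- The signless Laplacian spectral radius of the blow-up C₅∘(n-4,1,1,1,1) is the largest root of x³ - (n+2)x² + (3n-2)x - 4 = 0. -/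
open SimpleGraph Matrix Finset BigOperators

namespace C5aux

noncomputable def Cc (M x : ℝ) : ℝ := x^3 - (M+6)*x^2 + (3*M+10)*x - 4
noncomputable def q2 (M x : ℝ) : ℝ := x^2 - (M+2)*x + M

lemma Cc_root_finite (M : ℝ) : {x : ℝ | Cc M x = 0}.Finite := by
  have hp : (Polynomial.X^3 - Polynomial.C (M+6) * Polynomial.X^2
      + Polynomial.C (3*M+10) * Polynomial.X - Polynomial.C 4 : Polynomial ℝ) ≠ 0 := by
    intro h
    have hev := congrArg (Polynomial.eval 3) h
    simp at hev
    linarith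
  apply (Polynomial.finite_setOf_isRoot hp).subset
  intro x hx
  simp only [Set.mem_setOf_eq, Polynomial.IsRoot, Polynomial.eval_sub, Polynomial.eval_add,
    Polynomial.eval_mul, Polynomial.eval_pow, Polynomial.eval_X, Polynomial.eval_C]
  have := hx
  simp only [Set.mem_setOf_eq, Cc] at this
  linarith

lemma q2_root_finite (M : ℝ) : {x : ℝ | q2 M x = 0}.Finite := by
  have hp : (Polynomial.X^2 - Polynomial.C (M+2) * Polynomial.X
      + Polynomial.C M : Polynomial ℝ) ≠ 0 := by
    intro h
    have hev := congrArg (Polynomial.eval 1) h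
    simp at hev
    linarith
  apply (Polynomial.finite_setOf_isRoot hp).subset
  intro x hx
  simp only [Set.mem_setOf_eq, Polynomial.IsRoot, Polynomial.eval_add, Polynomial.eval_sub,
    Polynomial.eval_mul, Polynomial.eval_pow, Polynomial.eval_X, Polynomial.eval_C]
  have := hx
  simp only [Set.mem_setOf_eq, q2] at this
  linarith

lemma Cc_exists_root (M : ℝ) (hM : 1 ≤ M) : ∃ ρ, Cc M ρ = 0 ∧ M + 2 < ρ := by
  have hcont : ContinuousOn (Cc M) (Set.Icc (M+2) (M+6)) := by
    apply Continuous.continuousOn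
    unfold Cc
    continuity
  have hab : M + 2 ≤ M + 6 := by linarith
  have ha : Cc M (M+2) = -M^2 := by unfold Cc; ring
  have hb : Cc M (M+6) = (M+3)*(3*M+20) - M - 4 := by unfold Cc; ring
  have h0 : (0:ℝ) ∈ Set.Icc (Cc M (M+2)) (Cc M (M+6)) := by
    rw [ha, hb]; constructor <;> nlinarith
  obtain ⟨ρ, hρmem, hρ⟩ := intermediate_value_Icc hab hcont h0
  refine ⟨ρ, hρ, lt_of_le_of_ne hρmem.1 ?_⟩
  intro h
  rw [← h, ha] at hρ
  nlinarith

lemma spec_iff {V : Type*} [Fintype V] [DecidableEq V] (M : Matrix V V ℝ) (μ : ℝ) :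
    μ ∈ spectrum ℝ M ↔ ∃ v : V → ℝ, v ≠ 0 ∧ M *ᵥ v = μ • v := by
  rw [spectrum.mem_iff, Matrix.isUnit_iff_isUnit_det, isUnit_iff_ne_zero, not_not,
    ← Matrix.exists_mulVec_eq_zero_iff]
  have key : ∀ v : V → ℝ, (algebraMap ℝ (Matrix V V ℝ) μ - M) *ᵥ v = μ • v - M *ᵥ v := by
    intro v
    rw [Matrix.sub_mulVec]
    congr 1
    ext x
    simp [Matrix.algebraMap_eq_diagonal, Matrix.mulVec_diagonal]
  constructor
  · rintro ⟨v, hv, h⟩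
    exact ⟨v, hv, by rw [key] at h; exact (sub_eq_zero.mp h).symm⟩
  · rintro ⟨v, hv, h⟩
    exact ⟨v, hv, by rw [key, h, sub_self]⟩

section
variable {m : ℕ}

abbrev rr (m : ℕ) : Fin 5 → ℕ := ![m,1,1,1,1]
abbrev VV (m : ℕ) := (i : Fin 5) × Fin (rr m i)
abbrev GG (m : ℕ) := C5blowup (rr m)

def zz (m : ℕ) (k : Fin m) : VV m := ⟨0, k⟩
def ww1 (m : ℕ) : VV m := ⟨1, ⟨0, Nat.one_pos⟩⟩
def ww2 (m : ℕ) : VV m := ⟨2, ⟨0, Nat.one_pos⟩⟩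
def ww3 (m : ℕ) : VV m := ⟨3, ⟨0, Nat.one_pos⟩⟩
def ww4 (m : ℕ) : VV m := ⟨4, ⟨0, Nat.one_pos⟩⟩

lemma sum_V (f : VV m → ℝ) :
    ∑ b, f b = ∑ i : Fin 5, ∑ k : Fin (rr m i), f ⟨i,k⟩ := by
  rw [← Finset.univ_sigma_univ, Finset.sum_sigma]

lemma row_sum (a : VV m) (v : VV m → ℝ) :
    letI := Classical.decRel (GG m).Adj
    ∑ b, (if (GG m).Adj a b then v b else 0)
      = (∑ k : Fin (rr m 0), if (GG m).Adj a ⟨0,k⟩ then v ⟨0,k⟩ else 0)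
        + ((if (GG m).Adj a (ww1 m) then v (ww1 m) else 0)
        + (if (GG m).Adj a (ww2 m) then v (ww2 m) else 0)
        + (if (GG m).Adj a (ww3 m) then v (ww3 m) else 0)
        + (if (GG m).Adj a (ww4 m) then v (ww4 m) else 0)) := by
  letI := Classical.decRel (GG m).Adj
  rw [sum_V (fun b => if (GG m).Adj a b then v b else 0), Fin.sum_univ_five]
  have e1 : ∀ (g : Fin (rr m 1) → ℝ), ∑ k, g k = g ⟨0, Nat.one_pos⟩ := fun g => Fin.sum_univ_one g
  have e2 : ∀ (g : Fin (rr m 2) → ℝ), ∑ k, g k = g ⟨0, Nat.one_pos⟩ := fun g => Fin.sum_univ_one g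
  have e3 : ∀ (g : Fin (rr m 3) → ℝ), ∑ k, g k = g ⟨0, Nat.one_pos⟩ := fun g => Fin.sum_univ_one g
  have e4 : ∀ (g : Fin (rr m 4) → ℝ), ∑ k, g k = g ⟨0, Nat.one_pos⟩ := fun g => Fin.sum_univ_one g
  rw [e1, e2, e3, e4]
  simp only [ww1, ww2, ww3, ww4]; ring_nf; rfl

lemma slap_mulVec {V : Type*} [Fintype V] [DecidableEq V] (G : SimpleGraph V)
    (v : V → ℝ) (a : V) :
    letI := Classical.decRel G.Adj
    (signlessLaplacian G *ᵥ v) a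
      = (G.degree a : ℝ) * v a + ∑ b, (if G.Adj a b then v b else 0) := by
  letI := Classical.decRel G.Adj
  rw [signlessLaplacian, Matrix.add_mulVec]
  simp only [Pi.add_apply]
  congr 1
  · rw [SimpleGraph.degMatrix, Matrix.mulVec_diagonal]
  · rw [Matrix.mulVec, dotProduct]
    apply Finset.sum_congr rfl
    intro b _
    by_cases h : G.Adj a b <;> simp [h]

lemma deg_cast' (G : SimpleGraph (VV m)) (a : VV m) :
    letI := Classical.decRel G.Adj
    (G.degree a : ℝ) = ∑ b, (if G.Adj a b then (1:ℝ) else 0) := by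
  letI := Classical.decRel G.Adj
  rw [← SimpleGraph.card_neighborFinset_eq_degree, SimpleGraph.neighborFinset_eq_filter,
    Finset.card_filter]
  push_cast
  rfl

lemma card0 : ∑ _k : Fin (rr m 0), (1:ℝ) = m := by
  rw [Finset.sum_const, Finset.card_univ]
  show ((Fintype.card (Fin m)) : ℕ) • (1:ℝ) = m
  simp

lemma adjz1 (k : Fin m) : (GG m).Adj (zz m k) (ww1 m) :=
  Or.inr (show (1 : Fin 5) = 0 + 1 by decide)
lemma adjz4 (k : Fin m) : (GG m).Adj (zz m k) (ww4 m) :=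
  Or.inl (show (0 : Fin 5) = 4 + 1 by decide)
lemma nadjzz (k : Fin m) (k' : Fin (rr m 0)) : ¬ (GG m).Adj (zz m k) (⟨0,k'⟩ : VV m) :=
  (by decide : ¬((0:Fin 5) = 0 + 1 ∨ (0:Fin 5) = 0 + 1))
lemma nadjz2 (k : Fin m) : ¬ (GG m).Adj (zz m k) (ww2 m) :=
  (by decide : ¬((0:Fin 5) = 2 + 1 ∨ (2:Fin 5) = 0 + 1))
lemma nadjz3 (k : Fin m) : ¬ (GG m).Adj (zz m k) (ww3 m) :=
  (by decide : ¬((0:Fin 5) = 3 + 1 ∨ (3:Fin 5) = 0 + 1))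

lemma adj1z (k : Fin (rr m 0)) : (GG m).Adj (ww1 m) (⟨0,k⟩ : VV m) :=
  Or.inl (show (1 : Fin 5) = 0 + 1 by decide)
lemma adj12 : (GG m).Adj (ww1 m) (ww2 m) :=
  Or.inr (show (2 : Fin 5) = 1 + 1 by decide)
lemma nadj11 : ¬ (GG m).Adj (ww1 m) (ww1 m) :=
  (by decide : ¬((1:Fin 5) = 1 + 1 ∨ (1:Fin 5) = 1 + 1))
lemma nadj13 : ¬ (GG m).Adj (ww1 m) (ww3 m) :=
  (by decide : ¬((1:Fin 5) = 3 + 1 ∨ (3:Fin 5) = 1 + 1))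
lemma nadj14 : ¬ (GG m).Adj (ww1 m) (ww4 m) :=
  (by decide : ¬((1:Fin 5) = 4 + 1 ∨ (4:Fin 5) = 1 + 1))

lemma nadj2z (k : Fin (rr m 0)) : ¬ (GG m).Adj (ww2 m) (⟨0,k⟩ : VV m) :=
  (by decide : ¬((2:Fin 5) = 0 + 1 ∨ (0:Fin 5) = 2 + 1))
lemma adj21 : (GG m).Adj (ww2 m) (ww1 m) :=
  Or.inl (show (2 : Fin 5) = 1 + 1 by decide)
lemma nadj22 : ¬ (GG m).Adj (ww2 m) (ww2 m) :=
  (by decide : ¬((2:Fin 5) = 2 + 1 ∨ (2:Fin 5) = 2 + 1))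
lemma adj23 : (GG m).Adj (ww2 m) (ww3 m) :=
  Or.inr (show (3 : Fin 5) = 2 + 1 by decide)
lemma nadj24 : ¬ (GG m).Adj (ww2 m) (ww4 m) :=
  (by decide : ¬((2:Fin 5) = 4 + 1 ∨ (4:Fin 5) = 2 + 1))

lemma nadj3z (k : Fin (rr m 0)) : ¬ (GG m).Adj (ww3 m) (⟨0,k⟩ : VV m) :=
  (by decide : ¬((3:Fin 5) = 0 + 1 ∨ (0:Fin 5) = 3 + 1))
lemma nadj31 : ¬ (GG m).Adj (ww3 m) (ww1 m) :=
  (by decide : ¬((3:Fin 5) = 1 + 1 ∨ (1:Fin 5) = 3 + 1))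
lemma adj32 : (GG m).Adj (ww3 m) (ww2 m) :=
  Or.inl (show (3 : Fin 5) = 2 + 1 by decide)
lemma nadj33 : ¬ (GG m).Adj (ww3 m) (ww3 m) :=
  (by decide : ¬((3:Fin 5) = 3 + 1 ∨ (3:Fin 5) = 3 + 1))
lemma adj34 : (GG m).Adj (ww3 m) (ww4 m) :=
  Or.inr (show (4 : Fin 5) = 3 + 1 by decide)

lemma adj4z (k : Fin (rr m 0)) : (GG m).Adj (ww4 m) (⟨0,k⟩ : VV m) :=
  Or.inr (show (0 : Fin 5) = 4 + 1 by decide)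
lemma nadj41 : ¬ (GG m).Adj (ww4 m) (ww1 m) :=
  (by decide : ¬((4:Fin 5) = 1 + 1 ∨ (1:Fin 5) = 4 + 1))
lemma nadj42 : ¬ (GG m).Adj (ww4 m) (ww2 m) :=
  (by decide : ¬((4:Fin 5) = 2 + 1 ∨ (2:Fin 5) = 4 + 1))
lemma adj43 : (GG m).Adj (ww4 m) (ww3 m) :=
  Or.inl (show (4 : Fin 5) = 3 + 1 by decide)
lemma nadj44 : ¬ (GG m).Adj (ww4 m) (ww4 m) :=
  (by decide : ¬((4:Fin 5) = 4 + 1 ∨ (4:Fin 5) = 4 + 1))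

lemma Qz (v : VV m → ℝ) (k0 : Fin m) :
    (signlessLaplacian (GG m) *ᵥ v) (zz m k0)
      = 2 * v (zz m k0) + (v (ww1 m) + v (ww4 m)) := by
  letI := Classical.decRel (GG m).Adj
  rw [slap_mulVec, row_sum]
  rw [if_pos (adjz1 k0), if_pos (adjz4 k0), if_neg (nadjz2 k0), if_neg (nadjz3 k0)]
  rw [Finset.sum_congr rfl (fun k _ => if_neg (nadjzz k0 k)), Finset.sum_const_zero]
  have hdeg : ((GG m).degree (zz m k0) : ℝ) = 2 := by
    rw [deg_cast', row_sum]
    rw [if_pos (adjz1 k0), if_pos (adjz4 k0), if_neg (nadjz2 k0), if_neg (nadjz3 k0)]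
    rw [Finset.sum_congr rfl (fun k _ => if_neg (nadjzz k0 k)), Finset.sum_const_zero]
    ring
  rw [hdeg]
  ring

lemma Q1 (v : VV m → ℝ) :
    (signlessLaplacian (GG m) *ᵥ v) (ww1 m)
      = ((m:ℝ)+1) * v (ww1 m) + ((∑ k : Fin (rr m 0), v ⟨0,k⟩) + v (ww2 m)) := by
  letI := Classical.decRel (GG m).Adj
  rw [slap_mulVec, row_sum]
  rw [if_neg nadj11, if_pos adj12, if_neg nadj13, if_neg nadj14]
  rw [Finset.sum_congr rfl (fun k _ => if_pos (adj1z k))]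
  have hdeg : ((GG m).degree (ww1 m) : ℝ) = (m:ℝ) + 1 := by
    rw [deg_cast', row_sum]
    rw [if_neg nadj11, if_pos adj12, if_neg nadj13, if_neg nadj14]
    rw [Finset.sum_congr rfl (fun k _ => if_pos (adj1z k)), card0]
    ring
  rw [hdeg]
  ring

lemma Q2 (v : VV m → ℝ) :
    (signlessLaplacian (GG m) *ᵥ v) (ww2 m)
      = 2 * v (ww2 m) + (v (ww1 m) + v (ww3 m)) := by
  letI := Classical.decRel (GG m).Adj
  rw [slap_mulVec, row_sum]
  rw [if_pos adj21, if_neg nadj22, if_pos adj23, if_neg nadj24]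
  rw [Finset.sum_congr rfl (fun k _ => if_neg (nadj2z k)), Finset.sum_const_zero]
  have hdeg : ((GG m).degree (ww2 m) : ℝ) = 2 := by
    rw [deg_cast', row_sum]
    rw [if_pos adj21, if_neg nadj22, if_pos adj23, if_neg nadj24]
    rw [Finset.sum_congr rfl (fun k _ => if_neg (nadj2z k)), Finset.sum_const_zero]
    ring
  rw [hdeg]
  ring

lemma Q3 (v : VV m → ℝ) :
    (signlessLaplacian (GG m) *ᵥ v) (ww3 m)
      = 2 * v (ww3 m) + (v (ww2 m) + v (ww4 m)) := by
  letI := Classical.decRel (GG m).Adj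
  rw [slap_mulVec, row_sum]
  rw [if_neg nadj31, if_pos adj32, if_neg nadj33, if_pos adj34]
  rw [Finset.sum_congr rfl (fun k _ => if_neg (nadj3z k)), Finset.sum_const_zero]
  have hdeg : ((GG m).degree (ww3 m) : ℝ) = 2 := by
    rw [deg_cast', row_sum]
    rw [if_neg nadj31, if_pos adj32, if_neg nadj33, if_pos adj34]
    rw [Finset.sum_congr rfl (fun k _ => if_neg (nadj3z k)), Finset.sum_const_zero]
    ring
  rw [hdeg]
  ring

lemma Q4 (v : VV m → ℝ) :
    (signlessLaplacian (GG m) *ᵥ v) (ww4 m)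
      = ((m:ℝ)+1) * v (ww4 m) + (v (ww3 m) + (∑ k : Fin (rr m 0), v ⟨0,k⟩)) := by
  letI := Classical.decRel (GG m).Adj
  rw [slap_mulVec, row_sum]
  rw [if_neg nadj41, if_neg nadj42, if_pos adj43, if_neg nadj44]
  rw [Finset.sum_congr rfl (fun k _ => if_pos (adj4z k))]
  have hdeg : ((GG m).degree (ww4 m) : ℝ) = (m:ℝ) + 1 := by
    rw [deg_cast', row_sum]
    rw [if_neg nadj41, if_neg nadj42, if_pos adj43, if_neg nadj44]
    rw [Finset.sum_congr rfl (fun k _ => if_pos (adj4z k)), card0]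
    ring
  rw [hdeg]
  ring

lemma forward (hm : 1 ≤ m) (μ : ℝ)
    (hμ : μ ∈ spectrum ℝ (signlessLaplacian (GG m))) :
    μ = 2 ∨ Cc (m:ℝ) μ = 0 ∨ q2 (m:ℝ) μ = 0 := by
  rw [spec_iff] at hμ
  obtain ⟨v, hv0, hv⟩ := hμ
  by_cases h2 : μ = 2
  · exact Or.inl h2
  right
  have hne2 : μ - 2 ≠ 0 := sub_ne_zero.mpr h2
  have E0 : ∀ k : Fin (rr m 0), 2 * v ⟨0,k⟩ + (v (ww1 m) + v (ww4 m)) = μ * v ⟨0,k⟩ := by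
    intro k
    have h := congrFun hv (zz m k)
    rw [Qz v k] at h
    simpa [zz] using h
  have hz : ∀ k : Fin (rr m 0), v ⟨0,k⟩ = (v (ww1 m) + v (ww4 m)) / (μ - 2) := by
    intro k
    have h := E0 k
    field_simp
    linarith
  set y0 : ℝ := (v (ww1 m) + v (ww4 m)) / (μ - 2) with hy0def
  have hS : (∑ k : Fin (rr m 0), v ⟨0,k⟩) = (m:ℝ) * y0 := by
    rw [Finset.sum_congr rfl (fun k _ => hz k), Finset.sum_const, Finset.card_univ]
    show ((Fintype.card (Fin m)) : ℕ) • y0 = (m:ℝ) * y0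
    simp [nsmul_eq_mul]
  have e0 : (μ-2) * y0 = v (ww1 m) + v (ww4 m) := by
    rw [hy0def]; field_simp
  have e1 : μ * v (ww1 m) = ((m:ℝ)+1) * v (ww1 m) + ((m:ℝ)*y0 + v (ww2 m)) := by
    have h := congrFun hv (ww1 m)
    rw [Q1 v, hS] at h
    simpa using h.symm
  have e2 : μ * v (ww2 m) = 2 * v (ww2 m) + (v (ww1 m) + v (ww3 m)) := by
    have h := congrFun hv (ww2 m)
    rw [Q2 v] at h
    simpa using h.symm
  have e3 : μ * v (ww3 m) = 2 * v (ww3 m) + (v (ww2 m) + v (ww4 m)) := by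
    have h := congrFun hv (ww3 m)
    rw [Q3 v] at h
    simpa using h.symm
  have e4 : μ * v (ww4 m) = ((m:ℝ)+1) * v (ww4 m) + (v (ww3 m) + (m:ℝ)*y0) := by
    have h := congrFun hv (ww4 m)
    rw [Q4 v, hS] at h
    simpa using h.symm
  have hA : Cc (m:ℝ) μ * y0 = 0 := by
    unfold Cc
    linear_combination ((μ-3)*(μ-(m:ℝ)-1) - 1) * e0 + (μ-3)*e1 + e2 + e3 + (μ-3)*e4
  have hB : q2 (m:ℝ) μ * (v (ww2 m) - v (ww3 m)) = 0 := by
    unfold q2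
    linear_combination (μ-(m:ℝ)-1)*(e2 - e3) + (e1 - e4)
  have hw : v (ww1 m) - v (ww4 m) = (μ-1)*(v (ww2 m) - v (ww3 m)) := by
    linear_combination e3 - e2
  by_cases hc : Cc (m:ℝ) μ = 0
  · exact Or.inl hc
  by_cases hq : q2 (m:ℝ) μ = 0
  · exact Or.inr hq
  exfalso
  apply hv0
  have hy0 : y0 = 0 := by
    rcases mul_eq_zero.mp hA with h | h
    · exact absurd h hc
    · exact h
  have h23 : v (ww2 m) - v (ww3 m) = 0 := by
    rcases mul_eq_zero.mp hB with h | h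
    · exact absurd h hq
    · exact h
  have h14 : v (ww1 m) - v (ww4 m) = 0 := by rw [hw, h23, mul_zero]
  have hsum14 : v (ww1 m) + v (ww4 m) = 0 := by
    have := e0; rw [hy0] at this; linarith
  have hv1 : v (ww1 m) = 0 := by linarith
  have hv4 : v (ww4 m) = 0 := by linarith
  have hv2 : v (ww2 m) = 0 := by
    have := e1; rw [hv1, hy0] at this; linarith
  have hv3 : v (ww3 m) = 0 := by linarith
  have hvz : ∀ k : Fin (rr m 0), v ⟨0,k⟩ = 0 := by
    intro k
    rw [hz k]
    exact hy0
  funext b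
  obtain ⟨i, k⟩ := b
  simp only [Pi.zero_apply]
  rcases i with ⟨iv, hi⟩
  interval_cases iv
  · exact hvz k
  · have hk : k = ⟨0, Nat.one_pos⟩ := by
      refine Fin.ext (show k.val = 0 from ?_)
      have h1 : k.val < 1 := k.isLt
      omega
    subst hk
    exact hv1
  · have hk : k = ⟨0, Nat.one_pos⟩ := by
      refine Fin.ext (show k.val = 0 from ?_)
      have h1 : k.val < 1 := k.isLt
      omega
    subst hk
    exact hv2
  · have hk : k = ⟨0, Nat.one_pos⟩ := by
      refine Fin.ext (show k.val = 0 from ?_)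
      have h1 : k.val < 1 := k.isLt
      omega
    subst hk
    exact hv3
  · have hk : k = ⟨0, Nat.one_pos⟩ := by
      refine Fin.ext (show k.val = 0 from ?_)
      have h1 : k.val < 1 := k.isLt
      omega
    subst hk
    exact hv4

noncomputable def evec (m : ℕ) (μ : ℝ) : VV m → ℝ :=
  fun p => ![2*(μ-3), (μ-3)*(μ-2), μ-2, μ-2, (μ-3)*(μ-2)] p.1

lemma evec0 (μ : ℝ) (k : Fin (rr m 0)) : evec m μ ⟨0,k⟩ = 2*(μ-3) := rfl
lemma evec1 (μ : ℝ) : evec m μ (ww1 m) = (μ-3)*(μ-2) := rfl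
lemma evec2 (μ : ℝ) : evec m μ (ww2 m) = μ-2 := rfl
lemma evec3 (μ : ℝ) : evec m μ (ww3 m) = μ-2 := rfl
lemma evec4 (μ : ℝ) : evec m μ (ww4 m) = (μ-3)*(μ-2) := rfl

lemma evecsum (μ : ℝ) : ∑ k : Fin (rr m 0), evec m μ ⟨0,k⟩ = (m:ℝ) * (2*(μ-3)) := by
  rw [Finset.sum_congr rfl (fun k _ => evec0 μ k), Finset.sum_const, Finset.card_univ]
  show ((Fintype.card (Fin m)) : ℕ) • (2*(μ-3)) = (m:ℝ) * (2*(μ-3))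
  simp [nsmul_eq_mul]

lemma backward (hm : 1 ≤ m) (μ : ℝ) (hC : Cc (m:ℝ) μ = 0) :
    μ ∈ spectrum ℝ (signlessLaplacian (GG m)) := by
  have hM1 : (1:ℝ) ≤ (m:ℝ) := by exact_mod_cast hm
  have h2 : μ - 2 ≠ 0 := by
    intro h
    have hμ2 : μ = 2 := by linarith
    rw [hμ2] at hC
    unfold Cc at hC
    nlinarith
  rw [spec_iff]
  refine ⟨evec m μ, ?_, ?_⟩
  · intro h
    have h' := congrFun h (ww2 m)
    rw [evec2] at h'
    exact h2 (by simpa using h')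
  · funext b
    obtain ⟨i, k⟩ := b
    rcases i with ⟨iv, hi⟩
    interval_cases iv
    · change Fin m at k
      show (signlessLaplacian (GG m) *ᵥ evec m μ) (zz m k) = (μ • evec m μ) (zz m k)
      rw [Qz]
      have hzv : evec m μ (zz m k) = 2*(μ-3) := rfl
      rw [hzv, evec1, evec4, Pi.smul_apply, smul_eq_mul, hzv]
      ring
    · have hk : k = ⟨0, Nat.one_pos⟩ := by
        refine Fin.ext (show k.val = 0 from ?_); have h1 : k.val < 1 := k.isLt; omega
      subst hk
      show (signlessLaplacian (GG m) *ᵥ evec m μ) (ww1 m) = (μ • evec m μ) (ww1 m)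
      rw [Q1, evecsum, evec1, evec2, Pi.smul_apply, smul_eq_mul, evec1]
      unfold Cc at hC
      linear_combination -hC
    · have hk : k = ⟨0, Nat.one_pos⟩ := by
        refine Fin.ext (show k.val = 0 from ?_); have h1 : k.val < 1 := k.isLt; omega
      subst hk
      show (signlessLaplacian (GG m) *ᵥ evec m μ) (ww2 m) = (μ • evec m μ) (ww2 m)
      rw [Q2, evec1, evec2, evec3, Pi.smul_apply, smul_eq_mul, evec2]
      ring
    · have hk : k = ⟨0, Nat.one_pos⟩ := by
        refine Fin.ext (show k.val = 0 from ?_); have h1 : k.val < 1 := k.isLt; omega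
      subst hk
      show (signlessLaplacian (GG m) *ᵥ evec m μ) (ww3 m) = (μ • evec m μ) (ww3 m)
      rw [Q3, evec2, evec3, evec4, Pi.smul_apply, smul_eq_mul, evec3]
      ring
    · have hk : k = ⟨0, Nat.one_pos⟩ := by
        refine Fin.ext (show k.val = 0 from ?_); have h1 : k.val < 1 := k.isLt; omega
      subst hk
      show (signlessLaplacian (GG m) *ᵥ evec m μ) (ww4 m) = (μ • evec m μ) (ww4 m)
      rw [Q4, evecsum, evec3, evec4, Pi.smul_apply, smul_eq_mul, evec4]
      unfold Cc at hC
      linear_combination -hC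

lemma main (hm : 1 ≤ m) :
    Cc (m:ℝ) (qIndex (GG m)) = 0 ∧ ∀ x : ℝ, Cc (m:ℝ) x = 0 → x ≤ qIndex (GG m) := by
  have hM1 : (1:ℝ) ≤ (m:ℝ) := by exact_mod_cast hm
  obtain ⟨ρ, hρC, hρgt⟩ := Cc_exists_root (m:ℝ) hM1
  have hρmem := backward hm ρ hρC
  have hfin : (spectrum ℝ (signlessLaplacian (GG m))).Finite := by
    apply Set.Finite.subset
      (((Set.finite_singleton (2:ℝ)).union (Cc_root_finite (m:ℝ))).union (q2_root_finite (m:ℝ)))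
    intro x hx
    rcases forward hm x hx with h | h | h
    · exact Or.inl (Or.inl h)
    · exact Or.inl (Or.inr h)
    · exact Or.inr h
  have hne : (spectrum ℝ (signlessLaplacian (GG m))).Nonempty := ⟨ρ, hρmem⟩
  have hqdef : qIndex (GG m) = sSup (spectrum ℝ (signlessLaplacian (GG m))) := rfl
  have hqmem : qIndex (GG m) ∈ spectrum ℝ (signlessLaplacian (GG m)) := by
    rw [hqdef]; exact hne.csSup_mem hfin
  have hρle : ρ ≤ qIndex (GG m) := by
    rw [hqdef]; exact le_csSup hfin.bddAbove hρmem
  constructor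
  · rcases forward hm _ hqmem with h | h | h
    · exfalso; linarith
    · exact h
    · exfalso
      unfold q2 at h
      nlinarith
  · intro x hx
    have hxmem := backward hm x hx
    rw [hqdef]
    exact le_csSup hfin.bddAbove hxmem

end

end C5aux

/-- The `Q`-index of `C₅ ∘ (n-4,1,1,1,1)` is the largest root of
`x³ - (n+2)x² + (3n-2)x - 4 = 0`. -/
theorem stmt5 {n : ℕ} (hn : 5 ≤ n) :
    (qIndex (C5blowup ![n - 4, 1, 1, 1, 1])) ^ 3
        - ((n : ℝ) + 2) * (qIndex (C5blowup ![n - 4, 1, 1, 1, 1])) ^ 2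
        + (3 * (n : ℝ) - 2) * qIndex (C5blowup ![n - 4, 1, 1, 1, 1]) - 4 = 0 ∧
    ∀ x : ℝ, x ^ 3 - ((n : ℝ) + 2) * x ^ 2 + (3 * (n : ℝ) - 2) * x - 4 = 0 →
      x ≤ qIndex (C5blowup ![n - 4, 1, 1, 1, 1]) := by
  have hm : 1 ≤ n - 4 := by omega
  obtain ⟨h1, h2⟩ := C5aux.main hm
  have hcast : ((n - 4 : ℕ) : ℝ) = (n:ℝ) - 4 := by
    have h4 : (4:ℕ) ≤ n := by omega
    push_cast [h4]
    ring
  constructor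
  · have := h1
    unfold C5aux.Cc at this
    rw [hcast] at this
    linear_combination this
  · intro x hx
    apply h2
    unfold C5aux.Cc
    rw [hcast]
    linear_combination hx
end

section
/- For n ≥ 5, the signless Laplacian spectral radius of C₅∘(n-4,1,1,1,1) satisfies n - 1 - 1/n < q(C₅∘(n-4,1,1,1,1)) < n - 1/n. -/
open SimpleGraph Matrix Finset BigOperators

namespace Stmt6Aux

abbrev rv (n : ℕ) : Fin 5 → ℕ := ![n - 4, 1, 1, 1, 1]

lemma mem_spectrum_iff {V : Type*} [Fintype V] [DecidableEq V] (M : Matrix V V ℝ) (μ : ℝ) :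
    μ ∈ spectrum ℝ M ↔ ∃ x : V → ℝ, x ≠ 0 ∧ M *ᵥ x = μ • x := by
  rw [spectrum.mem_iff, Matrix.isUnit_iff_isUnit_det, isUnit_iff_ne_zero, not_not,
      ← Matrix.exists_mulVec_eq_zero_iff]
  constructor
  · rintro ⟨v, hv0, hv⟩
    refine ⟨v, hv0, ?_⟩
    rwa [Matrix.sub_mulVec, sub_eq_zero, Algebra.algebraMap_eq_smul_one,
      Matrix.smul_mulVec, Matrix.one_mulVec, eq_comm] at hv
  · rintro ⟨v, hv0, hv⟩
    refine ⟨v, hv0, ?_⟩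
    rw [Matrix.sub_mulVec, Algebra.algebraMap_eq_smul_one,
      Matrix.smul_mulVec, Matrix.one_mulVec, hv, sub_self]

lemma mulVec_eq (n : ℕ) (x : (i : Fin 5) × Fin (rv n i) → ℝ) (i : Fin 5) (k : Fin (rv n i)) :
    (signlessLaplacian (C5blowup (rv n)) *ᵥ x) ⟨i, k⟩ =
      (∑ j : Fin 5, if i = j + 1 ∨ j = i + 1 then ((rv n j : ℕ) : ℝ) else 0) * x ⟨i, k⟩ +
      ∑ j : Fin 5, if i = j + 1 ∨ j = i + 1 then (∑ l, x ⟨j, l⟩) else 0 := by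
  letI : DecidableRel (C5blowup (rv n)).Adj := Classical.decRel _
  show (((C5blowup (rv n)).degMatrix ℝ + (C5blowup (rv n)).adjMatrix ℝ) *ᵥ x) ⟨i, k⟩ = _
  rw [Matrix.add_mulVec, Pi.add_apply, SimpleGraph.degMatrix_mulVec_apply,
    SimpleGraph.adjMatrix_mulVec_apply]
  congr 1
  · congr 1
    have hd : (C5blowup (rv n)).degree ⟨i, k⟩
        = ∑ j : Fin 5, if i = j + 1 ∨ j = i + 1 then rv n j else 0 := by
      rw [SimpleGraph.degree, SimpleGraph.neighborFinset_eq_filter, Finset.card_filter,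
        ← Finset.univ_sigma_univ, Finset.sum_sigma]
      refine Finset.sum_congr rfl fun j _ => ?_
      by_cases hc : i = j + 1 ∨ j = i + 1
      · rw [if_pos hc]
        have hadj : ∀ l : Fin (rv n j), (C5blowup (rv n)).Adj ⟨i, k⟩ ⟨j, l⟩ := fun l => hc
        simp [hadj]
      · rw [if_neg hc]
        have hadj : ∀ l : Fin (rv n j), ¬ (C5blowup (rv n)).Adj ⟨i, k⟩ ⟨j, l⟩ := fun l => hc
        simp [hadj]
    rw [hd]
    push_cast [apply_ite (Nat.cast : ℕ → ℝ)]
    rfl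
  · rw [SimpleGraph.neighborFinset_eq_filter, Finset.sum_filter,
      ← Finset.univ_sigma_univ, Finset.sum_sigma]
    refine Finset.sum_congr rfl fun j _ => ?_
    by_cases hc : i = j + 1 ∨ j = i + 1
    · rw [if_pos hc]
      have hadj : ∀ l : Fin (rv n j), (C5blowup (rv n)).Adj ⟨i, k⟩ ⟨j, l⟩ := fun l => hc
      simp [hadj]
    · rw [if_neg hc]
      have hadj : ∀ l : Fin (rv n j), ¬ (C5blowup (rv n)).Adj ⟨i, k⟩ ⟨j, l⟩ := fun l => hc
      simp [hadj]

lemma row0 (n : ℕ) (x : (i : Fin 5) × Fin (rv n i) → ℝ) (k : Fin (rv n 0)) :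
    (signlessLaplacian (C5blowup (rv n)) *ᵥ x) ⟨0, k⟩ =
      2 * x ⟨0, k⟩ + ((∑ l, x ⟨1, l⟩) + ∑ l, x ⟨4, l⟩) := by
  rw [mulVec_eq]
  simp only [Fin.sum_univ_five,
    if_neg (show ¬((0:Fin 5) = 0 + 1 ∨ (0:Fin 5) = 0 + 1) by decide),
    if_pos (show ((0:Fin 5) = 1 + 1 ∨ (1:Fin 5) = 0 + 1) by decide),
    if_neg (show ¬((0:Fin 5) = 2 + 1 ∨ (2:Fin 5) = 0 + 1) by decide),
    if_neg (show ¬((0:Fin 5) = 3 + 1 ∨ (3:Fin 5) = 0 + 1) by decide),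
    if_pos (show ((0:Fin 5) = 4 + 1 ∨ (4:Fin 5) = 0 + 1) by decide)]
  norm_num [show rv n 1 = 1 from rfl, show rv n 4 = 1 from rfl]

lemma row1 (n : ℕ) (x : (i : Fin 5) × Fin (rv n i) → ℝ) (k : Fin (rv n 1)) :
    (signlessLaplacian (C5blowup (rv n)) *ᵥ x) ⟨1, k⟩ =
      (((n - 4 : ℕ) : ℝ) + 1) * x ⟨1, k⟩ + ((∑ l, x ⟨0, l⟩) + ∑ l, x ⟨2, l⟩) := by
  rw [mulVec_eq]
  simp only [Fin.sum_univ_five,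
    if_pos (show ((1:Fin 5) = 0 + 1 ∨ (0:Fin 5) = 1 + 1) by decide),
    if_neg (show ¬((1:Fin 5) = 1 + 1 ∨ (1:Fin 5) = 1 + 1) by decide),
    if_pos (show ((1:Fin 5) = 2 + 1 ∨ (2:Fin 5) = 1 + 1) by decide),
    if_neg (show ¬((1:Fin 5) = 3 + 1 ∨ (3:Fin 5) = 1 + 1) by decide),
    if_neg (show ¬((1:Fin 5) = 4 + 1 ∨ (4:Fin 5) = 1 + 1) by decide)]
  norm_num [show rv n 0 = n - 4 from rfl, show rv n 2 = 1 from rfl]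
  try ring

lemma row2 (n : ℕ) (x : (i : Fin 5) × Fin (rv n i) → ℝ) (k : Fin (rv n 2)) :
    (signlessLaplacian (C5blowup (rv n)) *ᵥ x) ⟨2, k⟩ =
      2 * x ⟨2, k⟩ + ((∑ l, x ⟨1, l⟩) + ∑ l, x ⟨3, l⟩) := by
  rw [mulVec_eq]
  simp only [Fin.sum_univ_five,
    if_neg (show ¬((2:Fin 5) = 0 + 1 ∨ (0:Fin 5) = 2 + 1) by decide),
    if_pos (show ((2:Fin 5) = 1 + 1 ∨ (1:Fin 5) = 2 + 1) by decide),
    if_neg (show ¬((2:Fin 5) = 2 + 1 ∨ (2:Fin 5) = 2 + 1) by decide),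
    if_pos (show ((2:Fin 5) = 3 + 1 ∨ (3:Fin 5) = 2 + 1) by decide),
    if_neg (show ¬((2:Fin 5) = 4 + 1 ∨ (4:Fin 5) = 2 + 1) by decide)]
  norm_num [show rv n 1 = 1 from rfl, show rv n 3 = 1 from rfl]

lemma row3 (n : ℕ) (x : (i : Fin 5) × Fin (rv n i) → ℝ) (k : Fin (rv n 3)) :
    (signlessLaplacian (C5blowup (rv n)) *ᵥ x) ⟨3, k⟩ =
      2 * x ⟨3, k⟩ + ((∑ l, x ⟨2, l⟩) + ∑ l, x ⟨4, l⟩) := by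
  rw [mulVec_eq]
  simp only [Fin.sum_univ_five,
    if_neg (show ¬((3:Fin 5) = 0 + 1 ∨ (0:Fin 5) = 3 + 1) by decide),
    if_neg (show ¬((3:Fin 5) = 1 + 1 ∨ (1:Fin 5) = 3 + 1) by decide),
    if_pos (show ((3:Fin 5) = 2 + 1 ∨ (2:Fin 5) = 3 + 1) by decide),
    if_neg (show ¬((3:Fin 5) = 3 + 1 ∨ (3:Fin 5) = 3 + 1) by decide),
    if_pos (show ((3:Fin 5) = 4 + 1 ∨ (4:Fin 5) = 3 + 1) by decide)]
  norm_num [show rv n 2 = 1 from rfl, show rv n 4 = 1 from rfl]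

lemma row4 (n : ℕ) (x : (i : Fin 5) × Fin (rv n i) → ℝ) (k : Fin (rv n 4)) :
    (signlessLaplacian (C5blowup (rv n)) *ᵥ x) ⟨4, k⟩ =
      (((n - 4 : ℕ) : ℝ) + 1) * x ⟨4, k⟩ + ((∑ l, x ⟨3, l⟩) + ∑ l, x ⟨0, l⟩) := by
  rw [mulVec_eq]
  simp only [Fin.sum_univ_five,
    if_pos (show ((4:Fin 5) = 0 + 1 ∨ (0:Fin 5) = 4 + 1) by decide),
    if_neg (show ¬((4:Fin 5) = 1 + 1 ∨ (1:Fin 5) = 4 + 1) by decide),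
    if_neg (show ¬((4:Fin 5) = 2 + 1 ∨ (2:Fin 5) = 4 + 1) by decide),
    if_pos (show ((4:Fin 5) = 3 + 1 ∨ (3:Fin 5) = 4 + 1) by decide),
    if_neg (show ¬((4:Fin 5) = 4 + 1 ∨ (4:Fin 5) = 4 + 1) by decide)]
  norm_num [show rv n 0 = n - 4 from rfl, show rv n 3 = 1 from rfl]
  try ring

lemma key (n : ℕ) (μ : ℝ) (x : (i : Fin 5) × Fin (rv n i) → ℝ) (hx : x ≠ 0)
    (h : signlessLaplacian (C5blowup (rv n)) *ᵥ x = μ • x) :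
    μ = 2 ∨ μ = 3 ∨ (μ - ((n - 4 : ℕ) : ℝ) - 1) * (μ - 1) = 1 ∨
      (μ - ((n - 4 : ℕ) : ℝ) - 1) * (μ - 2) * (μ - 3)
        = 2 * ((n - 4 : ℕ) : ℝ) * (μ - 3) + (μ - 2) := by
  set s : ℝ := ((n - 4 : ℕ) : ℝ) with hs
  -- individual row equations
  have hx0 : ∀ k, μ * x ⟨0, k⟩ = 2 * x ⟨0, k⟩ + ((∑ l, x ⟨1, l⟩) + ∑ l, x ⟨4, l⟩) := by
    intro k
    have hk := congrFun h ⟨0, k⟩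
    rw [row0] at hk
    simpa using hk.symm
  have hx1 : ∀ k, μ * x ⟨1, k⟩ = (s + 1) * x ⟨1, k⟩ + ((∑ l, x ⟨0, l⟩) + ∑ l, x ⟨2, l⟩) := by
    intro k
    have hk := congrFun h ⟨1, k⟩
    rw [row1] at hk
    simpa using hk.symm
  have hx2 : ∀ k, μ * x ⟨2, k⟩ = 2 * x ⟨2, k⟩ + ((∑ l, x ⟨1, l⟩) + ∑ l, x ⟨3, l⟩) := by
    intro k
    have hk := congrFun h ⟨2, k⟩
    rw [row2] at hk
    simpa using hk.symm
  have hx3 : ∀ k, μ * x ⟨3, k⟩ = 2 * x ⟨3, k⟩ + ((∑ l, x ⟨2, l⟩) + ∑ l, x ⟨4, l⟩) := by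
    intro k
    have hk := congrFun h ⟨3, k⟩
    rw [row3] at hk
    simpa using hk.symm
  have hx4 : ∀ k, μ * x ⟨4, k⟩ = (s + 1) * x ⟨4, k⟩ + ((∑ l, x ⟨3, l⟩) + ∑ l, x ⟨0, l⟩) := by
    intro k
    have hk := congrFun h ⟨4, k⟩
    rw [row4] at hk
    simpa using hk.symm
  -- singleton classes: the sum equals any element
  have e1 : ∀ k : Fin (rv n 1), (∑ l, x ⟨1, l⟩) = x ⟨1, k⟩ := by
    intro k
    refine Finset.sum_eq_single_of_mem k (Finset.mem_univ k) fun b _ hb => absurd ?_ hb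
    apply Fin.ext
    have hb1 : b.1 < 1 := b.isLt
    have hk1 : k.1 < 1 := k.isLt
    omega
  have e2 : ∀ k : Fin (rv n 2), (∑ l, x ⟨2, l⟩) = x ⟨2, k⟩ := by
    intro k
    refine Finset.sum_eq_single_of_mem k (Finset.mem_univ k) fun b _ hb => absurd ?_ hb
    apply Fin.ext
    have hb1 : b.1 < 1 := b.isLt
    have hk1 : k.1 < 1 := k.isLt
    omega
  have e3 : ∀ k : Fin (rv n 3), (∑ l, x ⟨3, l⟩) = x ⟨3, k⟩ := by
    intro k
    refine Finset.sum_eq_single_of_mem k (Finset.mem_univ k) fun b _ hb => absurd ?_ hb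
    apply Fin.ext
    have hb1 : b.1 < 1 := b.isLt
    have hk1 : k.1 < 1 := k.isLt
    omega
  have e4 : ∀ k : Fin (rv n 4), (∑ l, x ⟨4, l⟩) = x ⟨4, k⟩ := by
    intro k
    refine Finset.sum_eq_single_of_mem k (Finset.mem_univ k) fun b _ hb => absurd ?_ hb
    apply Fin.ext
    have hb1 : b.1 < 1 := b.isLt
    have hk1 : k.1 < 1 := k.isLt
    omega
  -- aggregated equations
  set A : ℝ := ∑ l, x ⟨0, l⟩ with hA
  set B : ℝ := ∑ l, x ⟨1, l⟩ with hB
  set C : ℝ := ∑ l, x ⟨2, l⟩ with hC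
  set D : ℝ := ∑ l, x ⟨3, l⟩ with hD
  set E : ℝ := ∑ l, x ⟨4, l⟩ with hE
  have hA0 : μ * A = 2 * A + s * (B + E) := by
    rw [hA, Finset.mul_sum]
    calc ∑ k, μ * x ⟨0, k⟩ = ∑ k : Fin (rv n 0), (2 * x ⟨0, k⟩ + (B + E)) :=
          Finset.sum_congr rfl fun k _ => hx0 k
      _ = 2 * A + s * (B + E) := by
          rw [Finset.sum_add_distrib, ← Finset.mul_sum, Finset.sum_const, Finset.card_univ,
            Fintype.card_fin, nsmul_eq_mul, ← hA]
          rfl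
  have hA1 : μ * B = (s + 1) * B + (A + C) := by
    obtain ⟨k⟩ := Fin.pos_iff_nonempty.mp (show 0 < rv n 1 from Nat.one_pos)
    rw [e1 k]
    exact hx1 k
  have hA2 : μ * C = 2 * C + (B + D) := by
    obtain ⟨k⟩ := Fin.pos_iff_nonempty.mp (show 0 < rv n 2 from Nat.one_pos)
    rw [e2 k]
    exact hx2 k
  have hA3 : μ * D = 2 * D + (C + E) := by
    obtain ⟨k⟩ := Fin.pos_iff_nonempty.mp (show 0 < rv n 3 from Nat.one_pos)
    rw [e3 k]
    exact hx3 k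
  have hA4 : μ * E = (s + 1) * E + (D + A) := by
    obtain ⟨k⟩ := Fin.pos_iff_nonempty.mp (show 0 < rv n 4 from Nat.one_pos)
    rw [e4 k]
    exact hx4 k
  by_contra hcon
  push_neg at hcon
  obtain ⟨hne2, hne3, hneq, hnec⟩ := hcon
  -- antisymmetric part
  have hu : (μ - s - 1) * (B - E) = C - D := by linear_combination hA1 - hA4
  have hw : (μ - 1) * (C - D) = B - E := by linear_combination hA2 - hA3
  have h5 : ((μ - s - 1) * (μ - 1) - 1) * (C - D) = 0 := by
    linear_combination (μ - s - 1) * hw + hu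
  have hCD : C - D = 0 := by
    rcases mul_eq_zero.mp h5 with h' | h'
    · exact absurd (by linear_combination h') hneq
    · exact h'
  have hBE : B - E = 0 := by rw [← hw, hCD, mul_zero]
  have h6 : (μ - 3) * (C + D) = B + E := by linear_combination hA2 + hA3
  have h7 : (μ - 2) * A = s * (B + E) := by linear_combination hA0
  have h8 : (μ - s - 1) * (B + E) = 2 * A + (C + D) := by linear_combination hA1 + hA4
  have hcube : ((μ - s - 1) * (μ - 2) * (μ - 3) - (2 * s * (μ - 3) + (μ - 2))) * (B + E) = 0 := by
    linear_combination (μ - 2) * (μ - 3) * h8 + 2 * (μ - 3) * h7 + (μ - 2) * h6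
  have hp : B + E = 0 := by
    rcases mul_eq_zero.mp hcube with h' | h'
    · exact absurd (by linear_combination h') hnec
    · exact h'
  have hq : C + D = 0 := by
    have := h6
    rw [hp] at this
    rcases mul_eq_zero.mp this with h' | h'
    · exact absurd (by linear_combination h') hne3
    · exact h'
  have hAz : A = 0 := by
    have := h7
    rw [hp, mul_zero] at this
    rcases mul_eq_zero.mp this with h' | h'
    · exact absurd (by linear_combination h') hne2
    · exact h'
  have hBz : B = 0 := by linarith
  have hCz : C = 0 := by linarith
  have hDz : D = 0 := by linarith
  have hEz : E = 0 := by linarith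
  apply hx
  funext v
  obtain ⟨j, k⟩ := v
  show x ⟨j, k⟩ = 0
  fin_cases j
  · have hk := hx0 k
    rw [hBz, hEz] at hk
    have : (μ - 2) * x ⟨0, k⟩ = 0 := by linear_combination hk
    rcases mul_eq_zero.mp this with h' | h'
    · exact absurd (by linear_combination h') hne2
    · exact h'
  · exact (e1 k).symm.trans hBz
  · exact (e2 k).symm.trans hCz
  · exact (e3 k).symm.trans hDz
  · exact (e4 k).symm.trans hEz

/-- candidate eigenvector -/
noncomputable def evec (n : ℕ) (μ : ℝ) : (i : Fin 5) × Fin (rv n i) → ℝ := fun v =>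
  if v.1 = 0 then (μ - 3) else if v.1 = 2 ∨ v.1 = 3 then (μ - 2) / 2 else (μ - 3) * (μ - 2) / 2

lemma evec0 (n : ℕ) (μ : ℝ) (l : Fin (rv n 0)) : evec n μ ⟨0, l⟩ = μ - 3 := if_pos rfl
lemma evec1 (n : ℕ) (μ : ℝ) (l : Fin (rv n 1)) : evec n μ ⟨1, l⟩ = (μ - 3) * (μ - 2) / 2 := by
  show (if (1 : Fin 5) = 0 then _ else if (1 : Fin 5) = 2 ∨ (1 : Fin 5) = 3 then _ else _) = _
  rw [if_neg (by decide), if_neg (by decide)]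
lemma evec2 (n : ℕ) (μ : ℝ) (l : Fin (rv n 2)) : evec n μ ⟨2, l⟩ = (μ - 2) / 2 := by
  show (if (2 : Fin 5) = 0 then _ else if (2 : Fin 5) = 2 ∨ (2 : Fin 5) = 3 then _ else _) = _
  rw [if_neg (by decide), if_pos (by decide)]
lemma evec3 (n : ℕ) (μ : ℝ) (l : Fin (rv n 3)) : evec n μ ⟨3, l⟩ = (μ - 2) / 2 := by
  show (if (3 : Fin 5) = 0 then _ else if (3 : Fin 5) = 2 ∨ (3 : Fin 5) = 3 then _ else _) = _
  rw [if_neg (by decide), if_pos (by decide)]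
lemma evec4 (n : ℕ) (μ : ℝ) (l : Fin (rv n 4)) : evec n μ ⟨4, l⟩ = (μ - 3) * (μ - 2) / 2 := by
  show (if (4 : Fin 5) = 0 then _ else if (4 : Fin 5) = 2 ∨ (4 : Fin 5) = 3 then _ else _) = _
  rw [if_neg (by decide), if_neg (by decide)]

lemma evec_sum0 (n : ℕ) (μ : ℝ) :
    (∑ l, evec n μ ⟨0, l⟩) = ((n - 4 : ℕ) : ℝ) * (μ - 3) := by
  rw [Finset.sum_congr rfl fun l _ => evec0 n μ l, Finset.sum_const, Finset.card_univ,
    Fintype.card_fin, nsmul_eq_mul]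
  rfl
lemma evec_sum1 (n : ℕ) (μ : ℝ) :
    (∑ l, evec n μ ⟨1, l⟩) = (μ - 3) * (μ - 2) / 2 := by
  rw [Finset.sum_congr rfl fun l _ => evec1 n μ l, Finset.sum_const, Finset.card_univ,
    Fintype.card_fin, show rv n 1 = 1 from rfl, one_nsmul]
lemma evec_sum2 (n : ℕ) (μ : ℝ) :
    (∑ l, evec n μ ⟨2, l⟩) = (μ - 2) / 2 := by
  rw [Finset.sum_congr rfl fun l _ => evec2 n μ l, Finset.sum_const, Finset.card_univ,
    Fintype.card_fin, show rv n 2 = 1 from rfl, one_nsmul]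
lemma evec_sum3 (n : ℕ) (μ : ℝ) :
    (∑ l, evec n μ ⟨3, l⟩) = (μ - 2) / 2 := by
  rw [Finset.sum_congr rfl fun l _ => evec3 n μ l, Finset.sum_const, Finset.card_univ,
    Fintype.card_fin, show rv n 3 = 1 from rfl, one_nsmul]
lemma evec_sum4 (n : ℕ) (μ : ℝ) :
    (∑ l, evec n μ ⟨4, l⟩) = (μ - 3) * (μ - 2) / 2 := by
  rw [Finset.sum_congr rfl fun l _ => evec4 n μ l, Finset.sum_const, Finset.card_univ,
    Fintype.card_fin, show rv n 4 = 1 from rfl, one_nsmul]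

lemma evec_eig (n : ℕ) (μ : ℝ)
    (hfμ : (μ - ((n - 4 : ℕ) : ℝ) - 1) * (μ - 2) * (μ - 3)
      - (2 * ((n - 4 : ℕ) : ℝ) * (μ - 3) + (μ - 2)) = 0) :
    signlessLaplacian (C5blowup (rv n)) *ᵥ evec n μ = μ • evec n μ := by
  funext v
  obtain ⟨j, k⟩ := v
  have hsm : ∀ w : (i : Fin 5) × Fin (rv n i), (μ • evec n μ) w = μ * evec n μ w :=
    fun w => rfl
  fin_cases j
  · rw [show (⟨⟨0, by omega⟩, k⟩ : (i : Fin 5) × Fin (rv n i)) = ⟨0, k⟩ from rfl,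
      row0, hsm, evec0, evec_sum1, evec_sum4]
    ring
  · rw [show (⟨⟨1, by omega⟩, k⟩ : (i : Fin 5) × Fin (rv n i)) = ⟨1, k⟩ from rfl,
      row1, hsm, evec1, evec_sum0, evec_sum2]
    linear_combination (-1/2 : ℝ) * hfμ
  · rw [show (⟨⟨2, by omega⟩, k⟩ : (i : Fin 5) × Fin (rv n i)) = ⟨2, k⟩ from rfl,
      row2, hsm, evec2, evec_sum1, evec_sum3]
    ring
  · rw [show (⟨⟨3, by omega⟩, k⟩ : (i : Fin 5) × Fin (rv n i)) = ⟨3, k⟩ from rfl,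
      row3, hsm, evec3, evec_sum2, evec_sum4]
    ring
  · rw [show (⟨⟨4, by omega⟩, k⟩ : (i : Fin 5) × Fin (rv n i)) = ⟨4, k⟩ from rfl,
      row4, hsm, evec4, evec_sum3, evec_sum0]
    linear_combination (-1/2 : ℝ) * hfμ

end Stmt6Aux

open Polynomial Stmt6Aux

set_option maxHeartbeats 2000000

/-- For `n ≥ 5`, `n - 1 - 1/n < q(C₅ ∘ (n-4,1,1,1,1)) < n - 1/n`. -/
theorem stmt6 {n : ℕ} (hn : 5 ≤ n) :
    (n : ℝ) - 1 - 1 / n < qIndex (C5blowup ![n - 4, 1, 1, 1, 1]) ∧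
    qIndex (C5blowup ![n - 4, 1, 1, 1, 1]) < (n : ℝ) - 1 / n := by
  have hm : (5 : ℝ) ≤ (n : ℝ) := by exact_mod_cast hn
  have hm0 : (0 : ℝ) < (n : ℝ) := by linarith
  have hinv0 : (0 : ℝ) < 1 / n := by positivity
  have hinv : (1 : ℝ) / n ≤ 1 / 5 := by
    rw [div_le_div_iff₀ hm0 (by norm_num)]; linarith
  have hminv : (n : ℝ) * (1 / n) = 1 := by field_simp
  have hs : ((n - 4 : ℕ) : ℝ) = (n : ℝ) - 4 := by
    rw [Nat.cast_sub (by omega)]; norm_num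
  set lo : ℝ := (n : ℝ) - 1 - 1 / n with hlo
  set hi : ℝ := (n : ℝ) - 1 / n with hhi
  set f : ℝ → ℝ := fun μ => (μ - ((n - 4 : ℕ) : ℝ) - 1) * (μ - 2) * (μ - 3)
      - (2 * ((n - 4 : ℕ) : ℝ) * (μ - 3) + (μ - 2))
    with hf
  -- sign of f at the endpoints
  have hflo : f lo < 0 := by
    have : f lo = -(3 * (n:ℝ)^2 + 5 * n + 1) / (n:ℝ)^3 := by
      simp only [hf]
      rw [hlo, hs]
      field_simp
      ring
    rw [this]
    apply div_neg_of_neg_of_pos _ (by positivity)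
    nlinarith
  have hfhi : 0 < f hi := by
    have : f hi = ((n:ℝ)^5 - 3*(n:ℝ)^4 - 3*(n:ℝ)^3 + 4*(n:ℝ)^2 - 2*n - 1) / (n:ℝ)^3 := by
      simp only [hf]
      rw [hhi, hs]
      field_simp
      ring
    rw [this]
    apply div_pos _ (by positivity)
    nlinarith [sq_nonneg ((n:ℝ) - 5), pow_pos hm0 3, pow_pos hm0 2,
      mul_le_mul_of_nonneg_left hm (show (0:ℝ) ≤ (n:ℝ)^3 * 2 by positivity),
      mul_le_mul_of_nonneg_left hm (show (0:ℝ) ≤ (n:ℝ)^2 * 3 by positivity)]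
  -- IVT produces a root μ of f in (lo, hi)
  have hlohi : lo ≤ hi := by rw [hlo, hhi]; linarith
  have hcont : ContinuousOn f (Set.Icc lo hi) := by fun_prop
  obtain ⟨μ, hμIcc, hfμ⟩ := intermediate_value_Icc hlohi hcont ⟨le_of_lt hflo, le_of_lt hfhi⟩
  have hloμ : lo < μ := lt_of_le_of_ne hμIcc.1 fun e => by rw [← e] at hfμ; linarith [hfμ]
  have hμhi : μ < hi := lt_of_le_of_ne hμIcc.2 fun e => by rw [e] at hfμ; linarith [hfμ]
  have h2μ : (2 : ℝ) < μ := by rw [hlo] at hloμ; linarith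
  -- μ is an eigenvalue
  have hy : evec n μ ≠ 0 := by
    intro h0
    have := congrFun h0 ⟨2, ⟨0, show 0 < 1 by norm_num⟩⟩
    rw [evec2] at this
    simp at this
    linarith
  have hmemμ : μ ∈ spectrum ℝ (signlessLaplacian (C5blowup (rv n))) :=
    (mem_spectrum_iff _ _).mpr ⟨evec n μ, hy, evec_eig n μ (by rw [hf] at hfμ; linear_combination hfμ)⟩
  -- every spectral value is < hi
  have hub : ∀ ν ∈ spectrum ℝ (signlessLaplacian (C5blowup (rv n))), ν < hi := by
    intro ν hν
    obtain ⟨x, hx0, hxe⟩ := (mem_spectrum_iff _ _).mp hν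
    rw [hhi]
    rcases key n ν x hx0 hxe with h' | h' | h' | h'
    · rw [h']; linarith
    · rw [h']; linarith
    · by_contra hge
      push_neg at hge
      rw [hs] at h'
      have ha : (14 : ℝ)/5 ≤ ν - ((n:ℝ) - 4) - 1 := by linarith
      have hb : (19 : ℝ)/5 ≤ ν - 1 := by linarith
      nlinarith [mul_le_mul ha hb (by norm_num) (by linarith)]
    · by_contra hge
      push_neg at hge
      rw [hs] at h'
      have ha : 3 - 1/(n:ℝ) ≤ ν - ((n:ℝ) - 4) - 1 := by linarith
      have hb : (n:ℝ) - 2 - 1/n ≤ ν - 2 := by linarith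
      have hstep : (n:ℝ) - 2 ≤ (ν - ((n:ℝ) - 4) - 1) * (ν - 2) - 2 * ((n:ℝ) - 4) := by
        nlinarith [mul_le_mul ha hb (by linarith) (by linarith), hminv, hinv, hinv0,
          sq_nonneg (1/(n:ℝ))]
      have h3 : (0:ℝ) < ν - 3 := by linarith
      have hrw : (ν - 3) * ((ν - ((n:ℝ) - 4) - 1) * (ν - 2) - 2 * ((n:ℝ) - 4)) = ν - 2 := by
        linear_combination h'
      have hgt := mul_le_mul_of_nonneg_left hstep (le_of_lt h3)
      have h93 : (9:ℝ)/5 ≤ ν - 3 := by linarith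
      have hm3 : (2:ℝ) ≤ (n:ℝ) - 3 := by linarith
      nlinarith [mul_le_mul h93 hm3 (by norm_num) (by linarith)]
  -- finiteness of the spectrum
  have hfin : (spectrum ℝ (signlessLaplacian (C5blowup (rv n)))).Finite := by
    have hZ1 : ({ν : ℝ | (ν - ((n - 4 : ℕ) : ℝ) - 1) * (ν - 1) = 1}).Finite := by
      have hp1 : ((X - Polynomial.C (((n - 4 : ℕ) : ℝ)+1)) * (X - Polynomial.C 1) - 1 : ℝ[X]) ≠ 0 := by
        intro h0
        have := congrArg (Polynomial.eval 1) h0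
        simp at this
      refine (Polynomial.finite_setOf_isRoot hp1).subset fun ν hν => ?_
      simp only [Set.mem_setOf_eq, Polynomial.IsRoot, Polynomial.eval_sub, Polynomial.eval_mul,
        Polynomial.eval_X, Polynomial.eval_C, Polynomial.eval_one]
      simp only [Set.mem_setOf_eq] at hν
      linear_combination hν
    have hZ2 : ({ν : ℝ | (ν - ((n - 4 : ℕ) : ℝ) - 1) * (ν - 2) * (ν - 3) = 2 * ((n - 4 : ℕ) : ℝ) * (ν - 3) + (ν - 2)}).Finite := by
      have hp2 : ((X - Polynomial.C (((n - 4 : ℕ) : ℝ)+1)) * (X - Polynomial.C 2) * (X - Polynomial.C 3)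
          - (Polynomial.C (2*((n - 4 : ℕ) : ℝ)) * (X - Polynomial.C 3) + (X - Polynomial.C 2)) : ℝ[X]) ≠ 0 := by
        intro h0
        have := congrArg (Polynomial.eval 3) h0
        simp at this
        norm_num at this
      refine (Polynomial.finite_setOf_isRoot hp2).subset fun ν hν => ?_
      simp only [Set.mem_setOf_eq, Polynomial.IsRoot, Polynomial.eval_sub, Polynomial.eval_mul,
        Polynomial.eval_add, Polynomial.eval_X, Polynomial.eval_C]
      simp only [Set.mem_setOf_eq] at hν
      linear_combination hν
    refine Set.Finite.subset (Set.Finite.union (Set.Finite.union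
      (Set.finite_singleton (2:ℝ)) (Set.finite_singleton (3:ℝ))) (hZ1.union hZ2)) ?_
    intro ν hν
    obtain ⟨x, hx0, hxe⟩ := (mem_spectrum_iff _ _).mp hν
    rcases key n ν x hx0 hxe with h' | h' | h' | h'
    · exact Or.inl (Or.inl h')
    · exact Or.inl (Or.inr h')
    · exact Or.inr (Or.inl h')
    · exact Or.inr (Or.inr h')
  have hbdd := hfin.bddAbove
  have hne : (spectrum ℝ (signlessLaplacian (C5blowup (rv n)))).Nonempty := ⟨μ, hmemμ⟩
  constructor
  · exact lt_of_lt_of_le hloμ (le_csSup hbdd hmemμ)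
  · exact hub _ (hne.csSup_mem hfin)
end

section
/- The signless Laplacian spectral radius of C₅•K_{1,m-5} is the largest root of x⁴ - (m+3)x³ + (5m-5)x² + (8-5m)x + 4 = 0. -/
open SimpleGraph Matrix Finset BigOperators

section Aux

variable {t : ℕ}

lemma mem_spectrum_iff_eig {n : Type*} [Fintype n] [DecidableEq n] (M : Matrix n n ℝ) (x : ℝ) :
    x ∈ spectrum ℝ M ↔ ∃ v : n → ℝ, v ≠ 0 ∧ M *ᵥ v = x • v := by
  rw [spectrum.mem_iff, Matrix.isUnit_iff_isUnit_det, isUnit_iff_ne_zero, not_not,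
    ← Matrix.exists_mulVec_eq_zero_iff]
  constructor
  · rintro ⟨v, hv, h⟩
    refine ⟨v, hv, ?_⟩
    have := h
    rw [Algebra.algebraMap_eq_smul_one, sub_mulVec, smul_mulVec, one_mulVec] at this
    have h2 := sub_eq_zero.mp this
    exact h2.symm
  · rintro ⟨v, hv, h⟩
    refine ⟨v, hv, ?_⟩
    rw [Algebra.algebraMap_eq_smul_one, sub_mulVec, smul_mulVec, one_mulVec, h, sub_self]

lemma adj_ll (t : ℕ) (i j : Fin 5) :
    (C5star t).Adj (Sum.inl i) (Sum.inl j) ↔ (i = j + 1 ∨ j = i + 1) := by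
  simp [C5star]

lemma adj_lr (t : ℕ) (i : Fin 5) (j : Fin t) :
    (C5star t).Adj (Sum.inl i) (Sum.inr j) ↔ i = 0 := by
  simp [C5star]

lemma adj_rl (t : ℕ) (i : Fin 5) (j : Fin t) :
    (C5star t).Adj (Sum.inr j) (Sum.inl i) ↔ i = 0 := by
  simp [C5star]

lemma adj_rr (t : ℕ) (j j' : Fin t) :
    ¬ (C5star t).Adj (Sum.inr j) (Sum.inr j') := by
  simp [C5star]

instance instDecC5 (t : ℕ) : DecidableRel (C5star t).Adj := fun a b =>
  inferInstanceAs (Decidable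
    ((∃ i j : Fin 5, a = Sum.inl i ∧ b = Sum.inl j ∧ (i = j + 1 ∨ j = i + 1)) ∨
    (a = Sum.inl 0 ∧ ∃ j : Fin t, b = Sum.inr j) ∨
    (b = Sum.inl 0 ∧ ∃ j : Fin t, a = Sum.inr j)))

lemma sl_eq {V : Type*} [Fintype V] [DecidableEq V] (G : SimpleGraph V) [DecidableRel G.Adj] :
    signlessLaplacian G = G.degMatrix ℝ + G.adjMatrix ℝ := by
  unfold signlessLaplacian
  congr!

lemma Q_mulVec {V : Type*} [Fintype V] [DecidableEq V] (G : SimpleGraph V) [DecidableRel G.Adj]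
    (v : V → ℝ) (i : V) :
    (signlessLaplacian G *ᵥ v) i
      = (∑ j, if G.Adj i j then (1:ℝ) else 0) * v i + ∑ j, (if G.Adj i j then v j else 0) := by
  rw [sl_eq, add_mulVec, Pi.add_apply, degMatrix_mulVec_apply, adjMatrix_mulVec_apply]
  congr 1
  · congr 1
    rw [degree, neighborFinset_eq_filter]
    rw [Finset.card_filter]
    push_cast
    rfl
  · rw [neighborFinset_eq_filter, Finset.sum_filter]

section coords
variable (t : ℕ) (v : Fin 5 ⊕ Fin t → ℝ)

lemma Q0 : (signlessLaplacian (C5star t) *ᵥ v) (Sum.inl 0)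
    = ((t:ℝ)+2) * v (Sum.inl 0) + (v (Sum.inl 1) + v (Sum.inl 4) + ∑ j, v (Sum.inr j)) := by
  rw [Q_mulVec]
  simp [Fintype.sum_sum_type, adj_ll, adj_lr, adj_rl, adj_rr, Fin.sum_univ_five,
    -Finset.sum_boole]
  first
  | (left; ring)
  | ring

lemma Q1 : (signlessLaplacian (C5star t) *ᵥ v) (Sum.inl 1)
    = 2 * v (Sum.inl 1) + (v (Sum.inl 0) + v (Sum.inl 2)) := by
  rw [Q_mulVec]
  simp [Fintype.sum_sum_type, adj_ll, adj_lr, adj_rl, adj_rr, Fin.sum_univ_five,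
    -Finset.sum_boole]
  first
  | (left; ring)
  | ring

lemma Q2 : (signlessLaplacian (C5star t) *ᵥ v) (Sum.inl 2)
    = 2 * v (Sum.inl 2) + (v (Sum.inl 1) + v (Sum.inl 3)) := by
  rw [Q_mulVec]
  simp [Fintype.sum_sum_type, adj_ll, adj_lr, adj_rl, adj_rr, Fin.sum_univ_five,
    -Finset.sum_boole]
  first
  | (left; ring)
  | ring

lemma Q3 : (signlessLaplacian (C5star t) *ᵥ v) (Sum.inl 3)
    = 2 * v (Sum.inl 3) + (v (Sum.inl 2) + v (Sum.inl 4)) := by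
  rw [Q_mulVec]
  simp [Fintype.sum_sum_type, adj_ll, adj_lr, adj_rl, adj_rr, Fin.sum_univ_five,
    -Finset.sum_boole]
  first
  | (left; ring)
  | ring

lemma Q4 : (signlessLaplacian (C5star t) *ᵥ v) (Sum.inl 4)
    = 2 * v (Sum.inl 4) + (v (Sum.inl 3) + v (Sum.inl 0)) := by
  rw [Q_mulVec]
  simp [Fintype.sum_sum_type, adj_ll, adj_lr, adj_rl, adj_rr, Fin.sum_univ_five,
    -Finset.sum_boole]
  first
  | (left; ring)
  | ring

lemma Qr (j : Fin t) : (signlessLaplacian (C5star t) *ᵥ v) (Sum.inr j)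
    = v (Sum.inr j) + v (Sum.inl 0) := by
  rw [Q_mulVec]
  simp [Fintype.sum_sum_type, adj_ll, adj_lr, adj_rl, adj_rr, Fin.sum_univ_five,
    -Finset.sum_boole]

end coords

/-- quartic -/
noncomputable def pq (t : ℕ) (x : ℝ) : ℝ :=
  x^4 - ((t:ℝ)+8)*x^3 + (5*(t:ℝ)+20)*x^2 - (5*(t:ℝ)+17)*x + 4

lemma eig_root (x : ℝ) (hx : x ∈ spectrum ℝ (signlessLaplacian (C5star t))) :
    (x - 1) * (x^2 - 3*x + 1) * pq t x = 0 := by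
  rw [mem_spectrum_iff_eig] at hx
  obtain ⟨v, hv, hQv⟩ := hx
  by_contra hne
  have h1 : x - 1 ≠ 0 := fun h => hne (by rw [h]; ring)
  have h2 : x^2 - 3*x + 1 ≠ 0 := fun h => hne (by rw [h]; ring)
  have h3 : pq t x ≠ 0 := fun h => hne (by rw [h]; ring)
  set a := v (Sum.inl 0) with ha
  set b1 := v (Sum.inl 1) with hb1
  set c2 := v (Sum.inl 2) with hc2
  set c3 := v (Sum.inl 3) with hc3
  set b4 := v (Sum.inl 4) with hb4
  have hE0 : ((t:ℝ)+2) * a + (b1 + b4 + ∑ j, v (Sum.inr j)) = x * a := by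
    rw [← Q0 t v, hQv]; simp; exact Or.inl rfl
  have hE1 : 2 * b1 + (a + c2) = x * b1 := by rw [← Q1 t v, hQv]; simp; exact Or.inl rfl
  have hE2 : 2 * c2 + (b1 + c3) = x * c2 := by rw [← Q2 t v, hQv]; simp; exact Or.inl rfl
  have hE3 : 2 * c3 + (c2 + b4) = x * c3 := by rw [← Q3 t v, hQv]; simp; exact Or.inl rfl
  have hE4 : 2 * b4 + (c3 + a) = x * b4 := by rw [← Q4 t v, hQv]; simp; exact Or.inl rfl
  have hEr : ∀ j : Fin t, v (Sum.inr j) + a = x * v (Sum.inr j) := by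
    intro j; rw [← Qr t v j, hQv]; simp
  set D := ∑ j, v (Sum.inr j) with hD
  have hED : D + (t:ℝ) * a = x * D := by
    have hsum : ∑ j : Fin t, (v (Sum.inr j) + a) = ∑ j : Fin t, x * v (Sum.inr j) :=
      Finset.sum_congr rfl (fun j _ => hEr j)
    rw [Finset.sum_add_distrib, Finset.sum_const, card_univ, Fintype.card_fin,
      nsmul_eq_mul, ← Finset.mul_sum] at hsum
    exact hsum
  -- antisymmetric part
  have k1 : (x^2 - 3*x + 1) * (c2 - c3) = 0 := by
    linear_combination -hE1 + hE4 - (x-2)*hE2 + (x-2)*hE3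
  have hc : c2 = c3 := by
    have := mul_eq_zero.mp k1
    rcases this with h | h
    · exact absurd h h2
    · linarith [sub_eq_zero.mp h]
  have hb : b1 = b4 := by linear_combination hE2 - hE3 + (x-1)*(sub_eq_zero.mpr hc)
  -- symmetric part
  have k2 : pq t x * (c2 + c3) = 0 := by
    unfold pq
    linear_combination (-(2:ℝ)*(x-1))*hE0 - 2*hED - (x^2-((t:ℝ)+3)*x+2)*(hE1+hE4)
      - ((x^2-((t:ℝ)+3)*x+2)*(x-2)-2*(x-1))*(hE2+hE3)
  have hu : c2 + c3 = 0 := by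
    rcases mul_eq_zero.mp k2 with h | h
    · exact absurd h h3
    · exact h
  have hc2z : c2 = 0 := by linarith
  have hc3z : c3 = 0 := by linarith
  have hs : b1 + b4 = 0 := by linear_combination hE2 + hE3 + (x-3)*hu
  have hb1z : b1 = 0 := by linarith
  have hb4z : b4 = 0 := by linarith
  have haz : a = 0 := by linear_combination hE1 + (x-2)*hb1z - hc2z
  have hrz : ∀ j : Fin t, v (Sum.inr j) = 0 := by
    intro j
    have := hEr j
    have hx1 : (x - 1) * v (Sum.inr j) = a := by linarith
    rw [haz] at hx1
    exact (mul_eq_zero.mp hx1).resolve_left h1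
  apply hv
  funext i
  rcases i with i | j
  · fin_cases i
    · exact haz
    · exact hb1z
    · exact hc2z
    · exact hc3z
    · exact hb4z
  · exact hrz j

lemma root_eig (ht : 1 ≤ t) (x : ℝ) (hx : pq t x = 0) :
    x ∈ spectrum ℝ (signlessLaplacian (C5star t)) := by
  have hx1 : x - 1 ≠ 0 := by
    intro h
    have hxe : x = 1 := by linarith [sub_eq_zero.mp h]
    rw [hxe] at hx
    unfold pq at hx
    have ht1 : (1:ℝ) ≤ (t:ℝ) := by exact_mod_cast ht
    nlinarith [hx]
  obtain ⟨d, hd⟩ : ∃ d : ℝ, (x - 1) * d = x^2 - 5*x + 5 :=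
    ⟨(x^2 - 5*x + 5) / (x - 1), by field_simp⟩
  set w : Fin 5 ⊕ Fin t → ℝ :=
    Sum.elim ![x^2 - 5*x + 5, x - 3, 1, 1, x - 3] (fun _ => d) with hw
  have hw0 : w (Sum.inl 0) = x^2 - 5*x + 5 := by simp [hw]
  have hw1 : w (Sum.inl 1) = x - 3 := by simp [hw]
  have hw2 : w (Sum.inl 2) = 1 := by simp [hw]
  have hw3 : w (Sum.inl 3) = 1 := by simp [hw]
  have hw4 : w (Sum.inl 4) = x - 3 := by simp [hw]
  have hwr : ∀ j : Fin t, w (Sum.inr j) = d := fun j => by simp [hw]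
  refine (mem_spectrum_iff_eig _ _).mpr ⟨w, ?_, ?_⟩
  · intro h
    have : w (Sum.inl 2) = 0 := by rw [h]; rfl
    rw [hw2] at this
    norm_num at this
  · funext i
    rcases i with i | j
    · fin_cases i
      · show (signlessLaplacian (C5star t) *ᵥ w) (Sum.inl 0) = (x • w) (Sum.inl 0)
        rw [Pi.smul_apply, smul_eq_mul, Q0, hw0, hw1, hw4]
        have hsum : ∑ j, w (Sum.inr j) = (t:ℝ) * d := by
          rw [Finset.sum_congr rfl (fun j _ => hwr j), Finset.sum_const, card_univ,
            Fintype.card_fin, nsmul_eq_mul]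
        rw [hsum]
        have key : (x-1) * (((t:ℝ)+2) * (x^2-5*x+5) + ((x-3) + (x-3) + (t:ℝ)*d)
            - x * (x^2-5*x+5)) = 0 := by
          unfold pq at hx
          linear_combination -hx + (t:ℝ)*hd
        have := mul_eq_zero.mp key
        rcases this with h | h
        · exact absurd h hx1
        · linarith
      · show (signlessLaplacian (C5star t) *ᵥ w) (Sum.inl 1) = (x • w) (Sum.inl 1)
        rw [Pi.smul_apply, smul_eq_mul, Q1, hw0, hw1, hw2]; ring
      · show (signlessLaplacian (C5star t) *ᵥ w) (Sum.inl 2) = (x • w) (Sum.inl 2)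
        rw [Pi.smul_apply, smul_eq_mul, Q2, hw1, hw2, hw3]; ring
      · show (signlessLaplacian (C5star t) *ᵥ w) (Sum.inl 3) = (x • w) (Sum.inl 3)
        rw [Pi.smul_apply, smul_eq_mul, Q3, hw2, hw3, hw4]; ring
      · show (signlessLaplacian (C5star t) *ᵥ w) (Sum.inl 4) = (x • w) (Sum.inl 4)
        rw [Pi.smul_apply, smul_eq_mul, Q4, hw0, hw3, hw4]; ring
    · rw [Pi.smul_apply, smul_eq_mul, Qr, hwr j, hw0]
      linear_combination -hd

lemma sl_herm : (signlessLaplacian (C5star t)).IsHermitian := by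
  rw [sl_eq (C5star t)]
  rw [Matrix.IsHermitian, Matrix.conjTranspose_eq_transpose_of_trivial]
  exact (isSymm_degMatrix (G := C5star t) (R := ℝ)).add (isSymm_adjMatrix (G := C5star t) (α := ℝ))

lemma qIndex_mem (ht : 1 ≤ t) : qIndex (C5star t) ∈ spectrum ℝ (signlessLaplacian (C5star t)) := by
  apply Set.Nonempty.csSup_mem _ (Matrix.finite_spectrum _)
  exact ⟨_, (sl_herm (t := t)).eigenvalues_mem_spectrum_real (Sum.inl 0)⟩


end Aux

/-- The `Q`-index of `C₅ • K_{1,m-5}` is the largest root of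
`x⁴ - (m+3)x³ + (5m-5)x² + (8-5m)x + 4 = 0`. -/
theorem stmt8 {m : ℕ} (hm : 6 ≤ m) :
    (qIndex (C5star (m - 5))) ^ 4 - ((m : ℝ) + 3) * (qIndex (C5star (m - 5))) ^ 3
        + (5 * (m : ℝ) - 5) * (qIndex (C5star (m - 5))) ^ 2
        + (8 - 5 * (m : ℝ)) * qIndex (C5star (m - 5)) + 4 = 0 ∧
    ∀ x : ℝ, x ^ 4 - ((m : ℝ) + 3) * x ^ 3 + (5 * (m : ℝ) - 5) * x ^ 2
        + (8 - 5 * (m : ℝ)) * x + 4 = 0 → x ≤ qIndex (C5star (m - 5)) := by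
  set t := m - 5 with htdef
  have ht : 1 ≤ t := by omega
  have hmt : (m : ℝ) = (t : ℝ) + 5 := by
    rw [htdef]; push_cast [Nat.cast_sub (by omega : 5 ≤ m)]; ring
  have hpq : ∀ y : ℝ, y ^ 4 - ((m : ℝ) + 3) * y ^ 3 + (5 * (m : ℝ) - 5) * y ^ 2
      + (8 - 5 * (m : ℝ)) * y + 4 = pq t y := by
    intro y; unfold pq; rw [hmt]; ring
  have hbdd : BddAbove (spectrum ℝ (signlessLaplacian (C5star t))) :=
    (Matrix.finite_spectrum _).bddAbove
  have part2 : ∀ x : ℝ, pq t x = 0 → x ≤ qIndex (C5star t) := by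
    intro x hx
    exact le_csSup hbdd (root_eig ht x hx)
  constructor
  · -- qIndex is a root
    have hq := eig_root (qIndex (C5star t)) (qIndex_mem ht)
    rw [hpq]
    rcases mul_eq_zero.mp hq with h | h
    · -- qIndex ≤ small values, contradiction via root in (3,4)
      exfalso
      have hle : qIndex (C5star t) < 3 := by
        rcases mul_eq_zero.mp h with h' | h'
        · nlinarith [h']
        · nlinarith [h']
      -- find root of pq in [3,4]
      have hc : ContinuousOn (pq t) (Set.Icc (3:ℝ) 4) := by
        apply Continuous.continuousOn
        unfold pq
        continuity
      have h3 : pq t 3 = 3*(t:ℝ) - 2 := by unfold pq; ring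
      have h4 : pq t 4 = -(4*(t:ℝ)) := by unfold pq; ring
      have ht1 : (1:ℝ) ≤ (t:ℝ) := by exact_mod_cast ht
      have hzero : (0:ℝ) ∈ Set.Icc (pq t 4) (pq t 3) := by
        rw [h3, h4]; constructor <;> nlinarith
      obtain ⟨r, hrIcc, hr0⟩ := intermediate_value_Icc' (by norm_num : (3:ℝ) ≤ 4) hc hzero
      have := part2 r hr0
      have : (3:ℝ) ≤ r := hrIcc.1
      linarith [part2 r hr0, hrIcc.1]
    · exact h
  · intro x hx
    rw [hpq] at hx
    exact part2 x hx
end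

section
/- Let G be a connected graph with Perron vector X = (x_v) of Q(G). If u₁v ∉ E(G), u₂v ∈ E(G), u₁ ≠ u₂, and x_{u₁} ≥ x_{u₂}, then q(G - u₂v + u₁v) > q(G). -/
open SimpleGraph Matrix Finset BigOperators

section Aux

open SimpleGraph Matrix Finset

lemma signlessLaplacian_eq {V : Type*} [Fintype V] [DecidableEq V] (G : SimpleGraph V)
    [inst : DecidableRel G.Adj] : signlessLaplacian G = G.degMatrix ℝ + G.adjMatrix ℝ := by
  rw [signlessLaplacian]
  congr!

lemma sl_mulVec {V : Type*} [Fintype V] [DecidableEq V] (G : SimpleGraph V)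
    [DecidableRel G.Adj] (Y : V → ℝ) (w : V) :
    (signlessLaplacian G *ᵥ Y) w = ∑ z, (if G.Adj w z then Y w + Y z else 0) := by
  rw [signlessLaplacian_eq]
  rw [add_mulVec, Pi.add_apply, degMatrix_mulVec_apply, adjMatrix_mulVec_apply]
  have hdeg : (G.degree w : ℝ) = ∑ z, (if G.Adj w z then (1:ℝ) else 0) := by
    rw [degree, neighborFinset_eq_filter, Finset.card_filter, Nat.cast_sum]
    congr 1; ext z; by_cases h : G.Adj w z <;> simp [h]
  rw [hdeg, Finset.sum_mul]
  rw [neighborFinset_eq_filter, Finset.sum_filter]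
  rw [← Finset.sum_add_distrib]
  congr 1; ext z
  by_cases h : G.Adj w z <;> simp [h]

lemma sl_isHermitian {V : Type*} [Fintype V] [DecidableEq V] (G : SimpleGraph V) :
    (signlessLaplacian G).IsHermitian := by
  classical
  rw [Matrix.IsHermitian, signlessLaplacian_eq]
  ext i j
  simp only [conjTranspose_apply, star_trivial]
  simp only [Matrix.add_apply, degMatrix, Matrix.diagonal_apply, adjMatrix_apply]
  by_cases h : i = j
  · subst h; simp
  · simp [h, Ne.symm h, G.adj_comm i j]

lemma sum_ite_sym2 {V : Type*} [Fintype V] [DecidableEq V] (a b : V) (hab : a ≠ b)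
    (f : V → ℝ) (w : V) :
    ∑ z, (if s(w,z) = s(a,b) then f z else 0)
      = (if w = a then f b else 0) + (if w = b then f a else 0) := by
  by_cases hwa : w = a
  · subst hwa
    have : ∀ z, (s(w,z) = s(w,b)) ↔ z = b := by
      intro z
      rw [Sym2.eq_iff]
      constructor
      · rintro (⟨-, h⟩ | ⟨h, -⟩)
        · exact h
        · exact absurd h hab
      · intro h; exact Or.inl ⟨rfl, h⟩
    simp only [this]
    simp [hab, Finset.sum_ite_eq']
  · by_cases hwb : w = b
    · subst hwb
      have : ∀ z, (s(w,z) = s(a,w)) ↔ z = a := by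
        intro z
        rw [Sym2.eq_iff]
        constructor
        · rintro (⟨h, -⟩ | ⟨-, h⟩)
          · exact absurd h hwa
          · exact h
        · intro h; exact Or.inr ⟨rfl, h⟩
      simp only [this]
      simp [hwa, Finset.sum_ite_eq']
    · have : ∀ z, (s(w,z) = s(a,b)) ↔ False := by
        intro z
        rw [Sym2.eq_iff]
        simp [hwa, hwb]
      simp [this, hwa, hwb]

lemma sl_rotate {V : Type*} [Fintype V] [DecidableEq V] (G : SimpleGraph V)
    (u₁ u₂ v : V) (h1 : ¬ G.Adj u₁ v) (h2 : G.Adj u₂ v) (hv : u₁ ≠ v) (hne : u₁ ≠ u₂)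
    (Y : V → ℝ) (w : V) :
    (signlessLaplacian (G.deleteEdges {s(u₂, v)} ⊔ SimpleGraph.fromEdgeSet {s(u₁, v)}) *ᵥ Y) w
      = (signlessLaplacian G *ᵥ Y) w
        + ((if w = u₁ then Y w + Y v else 0) + (if w = v then Y w + Y u₁ else 0))
        - ((if w = u₂ then Y w + Y v else 0) + (if w = v then Y w + Y u₂ else 0)) := by
  classical
  rw [sl_mulVec, sl_mulVec,
    ← sum_ite_sym2 u₁ v hv (fun z => Y w + Y z) w,
    ← sum_ite_sym2 u₂ v h2.ne (fun z => Y w + Y z) w]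
  rw [← Finset.sum_add_distrib, ← Finset.sum_sub_distrib]
  refine Finset.sum_congr rfl fun z _ => ?_
  by_cases hA : s(w,z) = s(u₁,v)
  · have hwz : w ≠ z := by
      rw [Sym2.eq_iff] at hA
      rintro rfl
      rcases hA with ⟨hw, hz⟩ | ⟨hw, hz⟩
      · exact hv (hw.symm.trans hz)
      · exact hv (hz.symm.trans hw)
    have hnadj : ¬ G.Adj w z := by
      intro h
      exact h1 ((G.mem_edgeSet).mp (hA ▸ (G.mem_edgeSet).mpr h))
    have hB : s(w,z) ≠ s(u₂,v) := by
      rw [hA]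
      intro hc
      rw [Sym2.eq_iff] at hc
      rcases hc with ⟨hc1, -⟩ | ⟨hc1, hc2⟩
      · exact hne hc1
      · exact hv hc1
    simp [sup_adj, deleteEdges_adj, fromEdgeSet_adj, hA, hwz, hnadj, hB, hne, hv, hne.symm,
      hv.symm, h2.ne, h2.ne']
  · by_cases hB : s(w,z) = s(u₂,v)
    · have hadj : G.Adj w z := (G.mem_edgeSet).mp (hB ▸ (G.mem_edgeSet).mpr h2)
      simp [sup_adj, deleteEdges_adj, fromEdgeSet_adj, hA, hB, hadj, hne, hv, hne.symm, hv.symm,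
        h2.ne, h2.ne']
    · simp [sup_adj, deleteEdges_adj, fromEdgeSet_adj, hA, hB]

variable {n : Type*} [Fintype n] [DecidableEq n] {A : Matrix n n ℝ}

lemma rayleigh_aux (hA : A.IsHermitian) (y : n → ℝ) :
    (y ⬝ᵥ (A *ᵥ y) = ∑ i, hA.eigenvalues i * (star (hA.eigenvectorUnitary : Matrix n n ℝ) *ᵥ y) i ^ 2)
    ∧ (y ⬝ᵥ y = ∑ i, (star (hA.eigenvectorUnitary : Matrix n n ℝ) *ᵥ y) i ^ 2)
    ∧ (A *ᵥ y = (hA.eigenvectorUnitary : Matrix n n ℝ) *ᵥ fun i =>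
        hA.eigenvalues i * (star (hA.eigenvectorUnitary : Matrix n n ℝ) *ᵥ y) i) := by
  have hstar : star (hA.eigenvectorUnitary : Matrix n n ℝ)
      = (hA.eigenvectorUnitary : Matrix n n ℝ)ᵀ := by
    rw [Matrix.star_eq_conjTranspose, conjTranspose]
    ext i j; simp
  have hUc : (hA.eigenvectorUnitary : Matrix n n ℝ) *ᵥ
      (star (hA.eigenvectorUnitary : Matrix n n ℝ) *ᵥ y) = y := by
    rw [mulVec_mulVec,
      (Unitary.mul_star_self_of_mem hA.eigenvectorUnitary.2 :
        (hA.eigenvectorUnitary : Matrix n n ℝ) * star (hA.eigenvectorUnitary : Matrix n n ℝ) = 1),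
      one_mulVec]
  have hdot : ∀ w : n → ℝ, y ⬝ᵥ ((hA.eigenvectorUnitary : Matrix n n ℝ) *ᵥ w)
      = (star (hA.eigenvectorUnitary : Matrix n n ℝ) *ᵥ y) ⬝ᵥ w := by
    intro w
    rw [dotProduct_mulVec, hstar, ← mulVec_transpose]
  have hdiag : A *ᵥ y = (hA.eigenvectorUnitary : Matrix n n ℝ) *ᵥ fun i =>
      hA.eigenvalues i * (star (hA.eigenvectorUnitary : Matrix n n ℝ) *ᵥ y) i := by
    have h1 : A *ᵥ y = (hA.eigenvectorUnitary : Matrix n n ℝ) *ᵥ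
        ((diagonal (RCLike.ofReal ∘ hA.eigenvalues) : Matrix n n ℝ) *ᵥ
          ((star (hA.eigenvectorUnitary : Matrix n n ℝ)) *ᵥ y)) := by
      conv_lhs => rw [hA.spectral_theorem, Unitary.conjStarAlgAut_apply]
      rw [← mulVec_mulVec, ← mulVec_mulVec]
    have h2 : (diagonal (RCLike.ofReal ∘ hA.eigenvalues) : Matrix n n ℝ) *ᵥ
        ((star (hA.eigenvectorUnitary : Matrix n n ℝ)) *ᵥ y)
        = fun i => hA.eigenvalues i * (star (hA.eigenvectorUnitary : Matrix n n ℝ) *ᵥ y) i := by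
      funext i
      simp [mulVec_diagonal]
    rw [h1, h2]
  refine ⟨?_, ?_, hdiag⟩
  · rw [hdiag, hdot]
    simp [dotProduct, mul_comm, sq, mul_assoc, mul_left_comm]
  · have h2 : y ⬝ᵥ y = y ⬝ᵥ ((hA.eigenvectorUnitary : Matrix n n ℝ) *ᵥ
        (star (hA.eigenvectorUnitary : Matrix n n ℝ) *ᵥ y)) := by rw [hUc]
    rw [h2, hdot]
    simp [dotProduct, sq]

lemma spectrum_bddAbove (hA : A.IsHermitian) : BddAbove (spectrum ℝ A) := by
  rw [hA.spectrum_real_eq_range_eigenvalues]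
  exact (Set.finite_range _).bddAbove

lemma eigenvalues_le_sSup (hA : A.IsHermitian) (i : n) :
    hA.eigenvalues i ≤ sSup (spectrum ℝ A) :=
  le_csSup (spectrum_bddAbove hA) (hA.eigenvalues_mem_spectrum_real i)

lemma rayleigh_le (hA : A.IsHermitian) (y : n → ℝ) :
    y ⬝ᵥ (A *ᵥ y) ≤ sSup (spectrum ℝ A) * (y ⬝ᵥ y) := by
  obtain ⟨h1, h2, -⟩ := rayleigh_aux hA y
  rw [h1, h2, Finset.mul_sum]
  apply Finset.sum_le_sum
  intro i _
  exact mul_le_mul_of_nonneg_right (eigenvalues_le_sSup hA i) (sq_nonneg _)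

lemma rayleigh_eq (hA : A.IsHermitian) (y : n → ℝ)
    (h : y ⬝ᵥ (A *ᵥ y) = sSup (spectrum ℝ A) * (y ⬝ᵥ y)) :
    A *ᵥ y = sSup (spectrum ℝ A) • y := by
  obtain ⟨h1, h2, h3⟩ := rayleigh_aux hA y
  set q := sSup (spectrum ℝ A) with hq
  have hz : ∑ i, (q - hA.eigenvalues i) * (star (hA.eigenvectorUnitary : Matrix n n ℝ) *ᵥ y) i ^ 2 = 0 := by
    have h' := h
    rw [h1, h2, Finset.mul_sum] at h'
    rw [Finset.sum_congr rfl (fun i _ => sub_mul (q) (hA.eigenvalues i) _),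
      Finset.sum_sub_distrib]
    linarith [h']
  have hterm : ∀ i ∈ Finset.univ, (0:ℝ) ≤ (q - hA.eigenvalues i) * (star (hA.eigenvectorUnitary : Matrix n n ℝ) *ᵥ y) i ^ 2 := by
    intro i _
    exact mul_nonneg (sub_nonneg.mpr (eigenvalues_le_sSup hA i)) (sq_nonneg _)
  have hall := (Finset.sum_eq_zero_iff_of_nonneg hterm).mp hz
  have hkey : ∀ i, hA.eigenvalues i * (star (hA.eigenvectorUnitary : Matrix n n ℝ) *ᵥ y) i
      = q * (star (hA.eigenvectorUnitary : Matrix n n ℝ) *ᵥ y) i := by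
    intro i
    have h' := hall i (Finset.mem_univ i)
    rcases mul_eq_zero.mp h' with hc | hc
    · rw [sub_eq_zero] at hc; rw [← hc]
    · rw [pow_eq_zero_iff (n := 2) (by norm_num)] at hc
      rw [hc, mul_zero, mul_zero]
  rw [h3]
  have hfun : (fun i => hA.eigenvalues i * (star (hA.eigenvectorUnitary : Matrix n n ℝ) *ᵥ y) i)
      = q • (star (hA.eigenvectorUnitary : Matrix n n ℝ) *ᵥ y) := by
    funext i; rw [hkey i]; rfl
  rw [hfun, mulVec_smul]
  congr 1
  rw [mulVec_mulVec,
    (Unitary.mul_star_self_of_mem hA.eigenvectorUnitary.2 :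
      (hA.eigenvectorUnitary : Matrix n n ℝ) * star (hA.eigenvectorUnitary : Matrix n n ℝ) = 1),
    one_mulVec]

end Aux

/-- Rotation lemma: let `G` be connected with Perron vector `X` of `Q(G)`.
If `u₁v ∉ E(G)`, `u₂v ∈ E(G)` and `x_{u₁} ≥ x_{u₂}`, then
`q(G - u₂v + u₁v) > q(G)`. -/
theorem stmt11 {V : Type*} [Fintype V] [DecidableEq V] (G : SimpleGraph V)
    (hG : G.Connected) (X : V → ℝ)
    (hpos : ∀ w, 0 < X w) (hunit : ∑ w, X w ^ 2 = 1)
    (heig : signlessLaplacian G *ᵥ X = qIndex G • X)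
    (u₁ u₂ v : V) (h1 : ¬ G.Adj u₁ v) (h2 : G.Adj u₂ v)
    (hne : u₁ ≠ u₂) (hv : u₁ ≠ v) (hx : X u₂ ≤ X u₁) :
    qIndex G <
      qIndex (G.deleteEdges {s(u₂, v)} ⊔ SimpleGraph.fromEdgeSet {s(u₁, v)}) := by
  classical
  have hherm' : (signlessLaplacian (G.deleteEdges {s(u₂, v)} ⊔ SimpleGraph.fromEdgeSet {s(u₁, v)})).IsHermitian :=
    sl_isHermitian _
  have hXX : X ⬝ᵥ X = 1 := by
    simpa [dotProduct, pow_two] using hunit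
  have hQX : X ⬝ᵥ (signlessLaplacian G *ᵥ X) = qIndex G := by
    rw [heig]
    simp [dotProduct_smul, hXX]
  have hrot := sl_rotate G u₁ u₂ v h1 h2 hv hne X
  have hQu : ∀ w, (signlessLaplacian G *ᵥ X) w = qIndex G * X w := by
    intro w
    rw [heig]
    rfl
  have hquad : X ⬝ᵥ (signlessLaplacian (G.deleteEdges {s(u₂, v)} ⊔ SimpleGraph.fromEdgeSet {s(u₁, v)}) *ᵥ X)
      = qIndex G + ((X u₁ + X v)^2 - (X u₂ + X v)^2) := by
    rw [dotProduct]
    have hsplit : ∀ w, X w * (signlessLaplacian (G.deleteEdges {s(u₂, v)} ⊔ SimpleGraph.fromEdgeSet {s(u₁, v)}) *ᵥ X) w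
        = X w * (signlessLaplacian G *ᵥ X) w
          + ((if w = u₁ then X w * (X w + X v) else 0) + (if w = v then X w * (X w + X u₁) else 0))
          - ((if w = u₂ then X w * (X w + X v) else 0) + (if w = v then X w * (X w + X u₂) else 0)) := by
      intro w
      rw [hrot w]
      by_cases hw1 : w = u₁ <;> by_cases hw2 : w = v <;> by_cases hw3 : w = u₂ <;>
        simp [hw1, hw2, hw3, hv, hne, h2.ne, Ne.symm hv, Ne.symm hne, h2.ne'] <;> ring
    rw [Finset.sum_congr rfl fun w _ => hsplit w]
    rw [Finset.sum_sub_distrib, Finset.sum_add_distrib, Finset.sum_add_distrib,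
      Finset.sum_add_distrib]
    simp only [Finset.sum_ite_eq', Finset.mem_univ, if_true]
    have : ∑ w, X w * (signlessLaplacian G *ᵥ X) w = qIndex G := hQX
    rw [this]
    have hu2v : u₂ ≠ v := h2.ne
    ring
  have hle : X ⬝ᵥ (signlessLaplacian (G.deleteEdges {s(u₂, v)} ⊔ SimpleGraph.fromEdgeSet {s(u₁, v)}) *ᵥ X)
      ≤ qIndex (G.deleteEdges {s(u₂, v)} ⊔ SimpleGraph.fromEdgeSet {s(u₁, v)}) := by
    have h' := rayleigh_le hherm' X
    rwa [hXX, mul_one] at h'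
  rcases lt_or_eq_of_le hx with hlt | heqx
  · have hkey : 0 < (X u₁ + X v)^2 - (X u₂ + X v)^2 := by
      nlinarith [hpos v, hpos u₁, hpos u₂,
        mul_pos (sub_pos.mpr hlt) (show 0 < X u₁ + X u₂ + 2 * X v by
          have := hpos u₁; have := hpos u₂; have := hpos v; linarith)]
    have : qIndex G < X ⬝ᵥ (signlessLaplacian (G.deleteEdges {s(u₂, v)} ⊔ SimpleGraph.fromEdgeSet {s(u₁, v)}) *ᵥ X) := by
      rw [hquad]; linarith
    exact lt_of_lt_of_le this hle
  · have hq0 : X ⬝ᵥ (signlessLaplacian (G.deleteEdges {s(u₂, v)} ⊔ SimpleGraph.fromEdgeSet {s(u₁, v)}) *ᵥ X) = qIndex G := by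
      rw [hquad, heqx]; ring
    have hleq : qIndex G ≤ qIndex (G.deleteEdges {s(u₂, v)} ⊔ SimpleGraph.fromEdgeSet {s(u₁, v)}) :=
      hq0 ▸ hle
    rcases lt_or_eq_of_le hleq with h | h
    · exact h
    · exfalso
      have heq' : X ⬝ᵥ (signlessLaplacian (G.deleteEdges {s(u₂, v)} ⊔ SimpleGraph.fromEdgeSet {s(u₁, v)}) *ᵥ X)
          = sSup (spectrum ℝ (signlessLaplacian (G.deleteEdges {s(u₂, v)} ⊔ SimpleGraph.fromEdgeSet {s(u₁, v)}))) * (X ⬝ᵥ X) := by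
        rw [hXX, mul_one, hq0, h]
        rfl
      have hev := rayleigh_eq hherm' X heq'
      have h₁ := congrFun hev u₁
      rw [hrot u₁] at h₁
      simp only [if_pos rfl, if_neg hv, if_neg hne, add_zero, zero_add] at h₁
      rw [hQu u₁] at h₁
      have hq' : sSup (spectrum ℝ (signlessLaplacian (G.deleteEdges {s(u₂, v)} ⊔ SimpleGraph.fromEdgeSet {s(u₁, v)})))
          = qIndex G := h.symm
      rw [hq'] at h₁
      have : X u₁ + X v = 0 := by
        have := h₁
        simp only [Pi.smul_apply, smul_eq_mul, if_true, ite_true, sub_zero] at this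
        linarith
      have := hpos u₁; have := hpos v
      linarith
end

section
/- In a non-bipartite graph G with m edges, if some vertex has degree at least m - 2, then G contains a triangle. -/
open SimpleGraph Matrix Finset BigOperators

/-- In a non-bipartite graph with `m` edges, if some vertex has degree at least `m - 2`,
then the graph contains a triangle. -/
theorem stmt15 {V : Type*} [Fintype V] [DecidableEq V]
    (G : SimpleGraph V) [DecidableRel G.Adj]
    (hnb : ¬ G.Colorable 2) (v : V)
    (hd : (G.edgeFinset.card : ℤ) - 2 ≤ G.degree v) :
    ¬ G.CliqueFree 3 := by
  intro hcf
  classical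
  have tri : ∀ a b c : V, G.Adj a b → G.Adj a c → G.Adj b c → False := fun a b c h1 h2 h3 =>
    hcf _ (SimpleGraph.is3Clique_triple_iff.mpr ⟨h1, h2, h3⟩)
  set S : Finset (Sym2 V) := G.edgeFinset \ G.incidenceFinset v with hSdef
  have hsub : G.incidenceFinset v ⊆ G.edgeFinset := by
    intro e he
    rw [SimpleGraph.mem_incidenceFinset] at he
    exact SimpleGraph.mem_edgeFinset.mpr he.1
  have hScard : S.card ≤ 2 := by
    have h1 : S.card = G.edgeFinset.card - G.degree v := by
      rw [hSdef, Finset.card_sdiff_of_subset hsub, SimpleGraph.card_incidenceFinset_eq_degree]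
    omega
  have hmemS : ∀ a b : V, G.Adj a b → a ≠ v → b ≠ v → s(a, b) ∈ S := by
    intro a b hab ha hb
    rw [hSdef, Finset.mem_sdiff, SimpleGraph.mem_incidenceFinset, SimpleGraph.mem_edgeFinset]
    refine ⟨hab, fun hmem => ?_⟩
    obtain ⟨-, hv⟩ := hmem
    rcases Sym2.mem_iff.mp hv with rfl | rfl
    · exact ha rfl
    · exact hb rfl
  have finS : ∀ e1 e2 e3 : Sym2 V, e1 ∈ S → e2 ∈ S → e3 ∈ S →
      e1 ≠ e2 → e1 ≠ e3 → e2 ≠ e3 → False := by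
    intro e1 e2 e3 h1 h2 h3 h12 h13 h23
    have hss : ({e1, e2, e3} : Finset (Sym2 V)) ⊆ S := by
      intro z hz
      simp only [Finset.mem_insert, Finset.mem_singleton] at hz
      rcases hz with rfl | rfl | rfl <;> assumption
    have hc := Finset.card_le_card hss
    rw [Finset.card_insert_of_notMem (by simp [h12, h13]),
        Finset.card_insert_of_notMem (by simp [h23]), Finset.card_singleton] at hc
    omega
  have memne : ∀ (z : V) (e f : Sym2 V), z ∈ e → ¬ z ∈ f → e ≠ f := by
    rintro z e f h1 h2 rfl; exact h2 h1
  have notmem : ∀ (z a b : V), z ≠ a → z ≠ b → ¬ z ∈ s(a, b) := by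
    intro z a b h1 h2 h
    rcases Sym2.mem_iff.mp h with rfl | rfl
    exacts [h1 rfl, h2 rfl]
  have key : ∀ c : V → Fin 2, ∃ x y, G.Adj x y ∧ c x = c y := by
    intro c
    by_contra hno
    push_neg at hno
    exact hnb ⟨SimpleGraph.Coloring.mk c fun {x y} h => hno x y h⟩
  set c₀ : V → Fin 2 := fun u => if G.Adj v u then 1 else 0 with hc0
  have c0case : ∀ p q : V, G.Adj p q → c₀ p = c₀ q →
      ¬ G.Adj v p ∧ ¬ G.Adj v q ∧ p ≠ v ∧ q ≠ v := by
    intro p q hpq h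
    by_cases h1 : G.Adj v p <;> by_cases h2 : G.Adj v q
    · exact (tri v p q h1 h2 hpq).elim
    · simp only [hc0, if_pos h1, if_neg h2] at h; exact absurd h (by decide)
    · simp only [hc0, if_neg h1, if_pos h2] at h; exact absurd h (by decide)
    · refine ⟨h1, h2, ?_, ?_⟩
      · rintro rfl; exact h2 hpq
      · rintro rfl; exact h1 hpq.symm
  have val1 : ∀ u : V, (1 : Fin 2) = c₀ u → G.Adj v u := by
    intro u h
    by_contra hc
    simp only [hc0, if_neg hc] at h
    exact absurd h (by decide)
  -- first coloring: neighbors of v get 1, rest 0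
  obtain ⟨a, b, hab, hcab⟩ := key c₀
  obtain ⟨hva, hvb, hav, hbv⟩ := c0case a b hab hcab
  have he1 : s(a, b) ∈ S := hmemS a b hab hav hbv
  -- case A: a is adjacent to some neighbor w of v
  have caseA : ∀ w : V, G.Adj a w → G.Adj v w → False := by
    intro w haw hvw
    have hwv : w ≠ v := (G.ne_of_adj hvw).symm
    have hwa : w ≠ a := by rintro rfl; exact hva hvw
    have hwb : w ≠ b := by rintro rfl; exact hvb hvw
    have he2 : s(a, w) ∈ S := hmemS a w haw hav hwv
    have h12 : s(a, b) ≠ s(a, w) :=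
      (memne w _ _ (by simp) (notmem w a b hwa hwb)).symm
    obtain ⟨p, q, hpq, hcpq⟩ := key (fun u => if u = b then 1 else c₀ u)
    by_cases hpb : p = b <;> by_cases hqb : q = b
    · exact hpq.ne (hpb.trans hqb.symm)
    · rw [if_pos hpb, if_neg hqb] at hcpq
      have hbq : G.Adj b q := hpb ▸ hpq
      have hvq : G.Adj v q := val1 q hcpq
      have hqv : q ≠ v := (G.ne_of_adj hvq).symm
      have hqa : q ≠ a := by rintro rfl; exact hva hvq
      have he3 : s(b, q) ∈ S := hmemS b q hbq hbv hqv
      exact finS _ _ _ he1 he2 he3 h12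
        ((memne q _ _ (by simp) (notmem q a b hqa hqb)).symm)
        ((memne b _ _ (by simp) (notmem b a w hab.ne' hwb.symm)).symm)
    · rw [if_neg hpb, if_pos hqb] at hcpq
      have hbp : G.Adj b p := hqb ▸ hpq.symm
      have hvp : G.Adj v p := val1 p hcpq.symm
      have hpv : p ≠ v := (G.ne_of_adj hvp).symm
      have hpa : p ≠ a := by rintro rfl; exact hva hvp
      have he3 : s(b, p) ∈ S := hmemS b p hbp hbv hpv
      exact finS _ _ _ he1 he2 he3 h12
        ((memne p _ _ (by simp) (notmem p a b hpa hpb)).symm)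
        ((memne b _ _ (by simp) (notmem b a w hab.ne' hwb.symm)).symm)
    · rw [if_neg hpb, if_neg hqb] at hcpq
      obtain ⟨hvp, hvq, hpv, hqv⟩ := c0case p q hpq hcpq
      have he3 : s(p, q) ∈ S := hmemS p q hpq hpv hqv
      exact finS _ _ _ he1 he2 he3 h12
        (memne b _ _ (by simp) (notmem b p q (Ne.symm hpb) (Ne.symm hqb)))
        (memne w _ _ (by simp) (notmem w p q (by rintro rfl; exact hvp hvw)
          (by rintro rfl; exact hvq hvw)))
  -- case path: there is a path a - b - z outside the neighborhood of v
  have pathCase : ∀ z : V, G.Adj b z → ¬ G.Adj v z → z ≠ v → z ≠ a → False := by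
    intro z hbz hvz hzv hza
    have he2 : s(b, z) ∈ S := hmemS b z hbz hbv hzv
    have h12 : s(a, b) ≠ s(b, z) :=
      memne a _ _ (by simp) (notmem a b z hab.ne (Ne.symm hza))
    obtain ⟨p, q, hpq, hcpq⟩ := key (fun u => if u = b then 1 else c₀ u)
    by_cases hpb : p = b <;> by_cases hqb : q = b
    · exact hpq.ne (hpb.trans hqb.symm)
    · rw [if_pos hpb, if_neg hqb] at hcpq
      have hbq : G.Adj b q := hpb ▸ hpq
      have hvq : G.Adj v q := val1 q hcpq
      have hqv : q ≠ v := (G.ne_of_adj hvq).symm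
      have hqa : q ≠ a := by rintro rfl; exact hva hvq
      have hqz : q ≠ z := by rintro rfl; exact hvz hvq
      have he3 : s(b, q) ∈ S := hmemS b q hbq hbv hqv
      exact finS _ _ _ he1 he2 he3 h12
        ((memne q _ _ (by simp) (notmem q a b hqa hqb)).symm)
        ((memne q _ _ (by simp) (notmem q b z hqb hqz)).symm)
    · rw [if_neg hpb, if_pos hqb] at hcpq
      have hbp : G.Adj b p := hqb ▸ hpq.symm
      have hvp : G.Adj v p := val1 p hcpq.symm
      have hpv : p ≠ v := (G.ne_of_adj hvp).symm
      have hpa : p ≠ a := by rintro rfl; exact hva hvp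
      have hpz : p ≠ z := by rintro rfl; exact hvz hvp
      have he3 : s(b, p) ∈ S := hmemS b p hbp hbv hpv
      exact finS _ _ _ he1 he2 he3 h12
        ((memne p _ _ (by simp) (notmem p a b hpa hpb)).symm)
        ((memne p _ _ (by simp) (notmem p b z hpb hpz)).symm)
    · rw [if_neg hpb, if_neg hqb] at hcpq
      obtain ⟨hvp, hvq, hpv, hqv⟩ := c0case p q hpq hcpq
      have he3 : s(p, q) ∈ S := hmemS p q hpq hpv hqv
      exact finS _ _ _ he1 he2 he3 h12
        (memne b _ _ (by simp) (notmem b p q (Ne.symm hpb) (Ne.symm hqb)))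
        (memne b _ _ (by simp) (notmem b p q (Ne.symm hpb) (Ne.symm hqb)))
  -- second coloring: flip a to 1
  obtain ⟨x, y, hxy, hcxy⟩ := key (fun u => if u = a then 1 else c₀ u)
  by_cases hxa : x = a
  · have hya : y ≠ a := fun h => hxy.ne (hxa.trans h.symm)
    rw [if_pos hxa, if_neg hya] at hcxy
    exact caseA y (hxa ▸ hxy) (val1 y hcxy)
  · by_cases hya : y = a
    · rw [if_neg hxa, if_pos hya] at hcxy
      exact caseA x (hya ▸ hxy.symm) (val1 x hcxy.symm)
    · rw [if_neg hxa, if_neg hya] at hcxy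
      obtain ⟨hvx, hvy, hxv, hyv⟩ := c0case x y hxy hcxy
      have he2 : s(x, y) ∈ S := hmemS x y hxy hxv hyv
      have h12 : s(a, b) ≠ s(x, y) :=
        memne a _ _ (by simp) (notmem a x y (Ne.symm hxa) (Ne.symm hya))
      by_cases hbx : b = x
      · exact pathCase y (by rw [hbx]; exact hxy) hvy hyv hya
      · by_cases hby : b = y
        · exact pathCase x (by rw [hby]; exact hxy.symm) hvx hxv hxa
        · -- disjoint edges s(a,b), s(x,y): flip both a and x to 1
          obtain ⟨p, q, hpq, hcpq⟩ := key
            (fun u => if u = x then 1 else if u = a then 1 else c₀ u)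
          have hval : ∀ u : V, u ≠ x → u ≠ a →
              (1 : Fin 2) = (if u = x then 1 else if u = a then 1 else c₀ u) →
              G.Adj v u := by
            intro u h1 h2 h
            rw [if_neg h1, if_neg h2] at h
            exact val1 u h
          by_cases hp1 : p = x ∨ p = a <;> by_cases hq1 : q = x ∨ q = a
          · -- both endpoints in {x, a}: edge between a and x
            have hax : G.Adj a x := by
              rcases hp1 with h1 | h1 <;> rcases hq1 with h2 | h2
              · exact absurd (h1.trans h2.symm) hpq.ne
              · exact (h2 ▸ h1 ▸ hpq).symm
              · exact h2 ▸ h1 ▸ hpq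
              · exact absurd (h1.trans h2.symm) hpq.ne
            have he3 : s(a, x) ∈ S := hmemS a x hax hav hxv
            exact finS _ _ _ he1 he2 he3 h12
              ((memne x _ _ (by simp) (notmem x a b hxa (fun h => hbx h.symm))).symm)
              ((memne a _ _ (by simp) (notmem a x y (Ne.symm hxa) (Ne.symm hya))).symm)
          · -- p ∈ {x,a}, q outside
            push_neg at hq1
            have hc1 : (1 : Fin 2) = if q = x then 1 else if q = a then 1 else c₀ q := by
              rcases hp1 with h1 | h1
              · rw [if_pos h1] at hcpq; exact hcpq
              · rw [if_neg (fun h => hxa ((h1.symm.trans h).symm)), if_pos h1] at hcpq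
                exact hcpq
            rw [if_neg hq1.1, if_neg hq1.2] at hc1
            have hvq : G.Adj v q := val1 q hc1
            have hqv : q ≠ v := (G.ne_of_adj hvq).symm
            rcases hp1 with h1 | h1
            · have he3 : s(x, q) ∈ S := hmemS x q (h1 ▸ hpq) hxv hqv
              exact finS _ _ _ he1 he2 he3 h12
                ((memne x _ _ (by simp) (notmem x a b hxa (fun h => hbx h.symm))).symm)
                ((memne q _ _ (by simp) (notmem q x y hq1.1
                  (by rintro rfl; exact hvy hvq))).symm)
            · have he3 : s(a, q) ∈ S := hmemS a q (h1 ▸ hpq) hav hqv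
              exact finS _ _ _ he1 he2 he3 h12
                ((memne q _ _ (by simp) (notmem q a b hq1.2
                  (by rintro rfl; exact hvb hvq))).symm)
                ((memne a _ _ (by simp) (notmem a x y (Ne.symm hxa) (Ne.symm hya))).symm)
          · -- q ∈ {x,a}, p outside
            push_neg at hp1
            have hc1 : (1 : Fin 2) = if p = x then 1 else if p = a then 1 else c₀ p := by
              rcases hq1 with h1 | h1
              · rw [if_pos h1] at hcpq; exact hcpq.symm
              · rw [if_neg (fun h => hxa ((h1.symm.trans h).symm)), if_pos h1] at hcpq
                exact hcpq.symm
            rw [if_neg hp1.1, if_neg hp1.2] at hc1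
            have hvp : G.Adj v p := val1 p hc1
            have hpv : p ≠ v := (G.ne_of_adj hvp).symm
            rcases hq1 with h1 | h1
            · have he3 : s(x, p) ∈ S := hmemS x p (h1 ▸ hpq.symm) hxv hpv
              exact finS _ _ _ he1 he2 he3 h12
                ((memne x _ _ (by simp) (notmem x a b hxa (fun h => hbx h.symm))).symm)
                ((memne p _ _ (by simp) (notmem p x y hp1.1
                  (by rintro rfl; exact hvy hvp))).symm)
            · have he3 : s(a, p) ∈ S := hmemS a p (h1 ▸ hpq.symm) hav hpv
              exact finS _ _ _ he1 he2 he3 h12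
                ((memne p _ _ (by simp) (notmem p a b hp1.2
                  (by rintro rfl; exact hvb hvp))).symm)
                ((memne a _ _ (by simp) (notmem a x y (Ne.symm hxa) (Ne.symm hya))).symm)
          · -- both outside {x, a}
            push_neg at hp1; push_neg at hq1
            rw [if_neg hp1.1, if_neg hp1.2, if_neg hq1.1, if_neg hq1.2] at hcpq
            obtain ⟨hvp, hvq, hpv, hqv⟩ := c0case p q hpq hcpq
            have he3 : s(p, q) ∈ S := hmemS p q hpq hpv hqv
            exact finS _ _ _ he1 he2 he3 h12
              (memne a _ _ (by simp) (notmem a p q (Ne.symm hp1.2) (Ne.symm hq1.2)))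
              (memne x _ _ (by simp) (notmem x p q (Ne.symm hp1.1) (Ne.symm hq1.1)))
end

section
/- Let G be a triangle-free graph with m edges and let u be a vertex with 2 ≤ d(u) ≤ m - 4, where m ≥ 8. Then d(u) + m(u) ≤ m - 2, where m(u) = (1/d(u)) Σ_{v∈N(u)} d(v). -/
open SimpleGraph Matrix Finset BigOperators

/-- Let `G` be a triangle-free graph with `m ≥ 8` edges and let `u` be a vertex with
`2 ≤ d(u) ≤ m - 4`. Then `d(u) + m(u) ≤ m - 2`, where `m(u)` is the average degree of
the neighbours of `u`. -/
theorem stmt18 {V : Type*} [Fintype V] [DecidableEq V]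
    (G : SimpleGraph V) [DecidableRel G.Adj]
    {m : ℕ} (hm : G.edgeFinset.card = m) (hm8 : 8 ≤ m) (htf : G.CliqueFree 3)
    (u : V) (h2 : 2 ≤ G.degree u) (h4 : G.degree u ≤ m - 4) :
    (G.degree u : ℝ) + (∑ v ∈ G.neighborFinset u, (G.degree v : ℝ)) / G.degree u
      ≤ (m : ℝ) - 2 := by
  classical
  have hS : (∑ v ∈ G.neighborFinset u, G.degree v) ≤ m := by
    rw [← hm]
    have hcard : (∑ v ∈ G.neighborFinset u, G.degree v)
        = ((G.neighborFinset u).sigma (fun v => G.neighborFinset v)).card := by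
      rw [Finset.card_sigma]; rfl
    rw [hcard]
    apply Finset.card_le_card_of_injOn (fun p => s(p.1, p.2))
    · rintro ⟨a, b⟩ hp
      simp only [Finset.mem_coe, Finset.mem_sigma, SimpleGraph.mem_neighborFinset] at hp
      simpa [SimpleGraph.mem_edgeFinset] using hp.2
    · rintro ⟨a, b⟩ hp ⟨c, d⟩ hq h
      simp only [Finset.mem_coe, Finset.mem_sigma, SimpleGraph.mem_neighborFinset] at hp hq
      simp only [Sym2.eq_iff] at h
      rcases h with ⟨h1, h2⟩ | ⟨h1, h2⟩
      · subst h1; subst h2; rfl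
      · subst h1; subst h2
        by_cases hab : a = b
        · subst hab; rfl
        · exact absurd (SimpleGraph.is3Clique_triple_iff.2 ⟨hp.1, hq.1, hp.2⟩)
            (htf {u, a, b})
  have hd0 : (0 : ℝ) < (G.degree u : ℝ) := by
    have : 0 < G.degree u := by omega
    exact_mod_cast this
  have hSR : (∑ v ∈ G.neighborFinset u, (G.degree v : ℝ)) ≤ (m : ℝ) := by
    exact_mod_cast hS
  have h2R : (2 : ℝ) ≤ (G.degree u : ℝ) := by exact_mod_cast h2
  have h4R : (G.degree u : ℝ) ≤ (m : ℝ) - 4 := by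
    have h' : (G.degree u : ℝ) ≤ ((m - 4 : ℕ) : ℝ) := by exact_mod_cast h4
    have h4m : (4 : ℕ) ≤ m := by omega
    rw [Nat.cast_sub h4m] at h'
    simpa using h'
  have hm8R : (8 : ℝ) ≤ (m : ℝ) := by exact_mod_cast hm8
  have step1 : (∑ v ∈ G.neighborFinset u, (G.degree v : ℝ)) / G.degree u
      ≤ (m : ℝ) / G.degree u := by gcongr
  have step2 : (m : ℝ) / G.degree u ≤ (m : ℝ) - 2 - G.degree u := by
    rw [div_le_iff₀ hd0]
    nlinarith
  linarith
end
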